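/- arXiv:2111.08898 — 9 statements merged into one kernel-verified Lean document; each statement's English description precedes it below -/
import Mathlib

section
/- Let n ≥ 1 and let A = (a_{i,j}), B = (b_{i,j}) ∈ Ξ_{2n}. Then A ⪯ B holds if and only if both of the following hold: (i) for all u ∈ [1,n] and v ∈ [1,2n] with u < v, ∑_{i≤u, j≥v} a_{i,j} ≤ ∑_{i≤u, j≥v} b_{i,j}; and (ii) for all u, v ∈ [1,n] with u > v, ∑_{i≥u, j≤v} a_{i,j} ≤ ∑_{i≥u, j≤v} b_{i,j}. -/
open Finset

lemma sum_Icc_reflect (m a b : ℕ) (ha : 1 ≤ a) (hb : b ≤ m) (f : ℕ → ℕ) :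
    ∑ i ∈ Icc a b, f i = ∑ i ∈ Icc (m + 1 - b) (m + 1 - a), f (m + 1 - i) := by
  apply Finset.sum_nbij' (fun i => m + 1 - i) (fun i => m + 1 - i) <;>
    intro x hx <;> simp only [mem_Icc] at * <;> first
      | omega
      | (congr 1; omega)

lemma corner_reflect (n : ℕ) (A : ℕ → ℕ → ℕ)
    (hA : ∀ i j, 1 ≤ i → i ≤ 2 * n → 1 ≤ j → j ≤ 2 * n →
      A i j = A (2 * n + 1 - i) (2 * n + 1 - j))
    (u v : ℕ) (hu : 1 ≤ u) (huv : u < v) (hv : v ≤ 2 * n) :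
    ∑ i ∈ Icc 1 u, ∑ j ∈ Icc v (2 * n), A i j
      = ∑ i ∈ Icc (2 * n + 1 - u) (2 * n), ∑ j ∈ Icc 1 (2 * n + 1 - v), A i j := by
  rw [sum_Icc_reflect (2 * n) 1 u (le_refl 1) (by omega)]
  have h1 : 2 * n + 1 - u = 2 * n + 1 - u := rfl
  apply Finset.sum_congr
  · congr 1 <;> omega
  intro i hi
  simp only [mem_Icc] at hi
  rw [sum_Icc_reflect (2 * n) v (2 * n) (by omega) (le_refl _)]
  apply Finset.sum_congr
  · congr 1 <;> omega
  intro j hj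
  simp only [mem_Icc] at hj
  rw [hA (2 * n + 1 - i) (2 * n + 1 - j) (by omega) (by omega) (by omega) (by omega)]
  congr 1 <;> omega

/-- For symmetric matrices `A, B ∈ Ξ_{2n}`, the preorder `A ⪯ B` (defined through
upper-right corner sums over all `1 ≤ u < v ≤ 2n`) is equivalent to the pair of
conditions (i) on corner sums with `u ∈ [1,n]`, `v ∈ [1,2n]`, `u < v`, and
(ii) on lower-left corner sums with `u, v ∈ [1,n]`, `u > v`. -/
theorem prec_iff_two_conditions (n : ℕ) (hn : 1 ≤ n) (A B : ℕ → ℕ → ℕ)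
    (hA : ∀ i j, 1 ≤ i → i ≤ 2 * n → 1 ≤ j → j ≤ 2 * n →
      A i j = A (2 * n + 1 - i) (2 * n + 1 - j))
    (hB : ∀ i j, 1 ≤ i → i ≤ 2 * n → 1 ≤ j → j ≤ 2 * n →
      B i j = B (2 * n + 1 - i) (2 * n + 1 - j)) :
    (∀ u v, 1 ≤ u → u < v → v ≤ 2 * n →
        (∑ i ∈ Icc 1 u, ∑ j ∈ Icc v (2 * n), A i j)
          ≤ ∑ i ∈ Icc 1 u, ∑ j ∈ Icc v (2 * n), B i j)
    ↔ ((∀ u v, 1 ≤ u → u ≤ n → 1 ≤ v → v ≤ 2 * n → u < v →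
          (∑ i ∈ Icc 1 u, ∑ j ∈ Icc v (2 * n), A i j)
            ≤ ∑ i ∈ Icc 1 u, ∑ j ∈ Icc v (2 * n), B i j)
        ∧ (∀ u v, 1 ≤ v → v < u → u ≤ n →
          (∑ i ∈ Icc u (2 * n), ∑ j ∈ Icc 1 v, A i j)
            ≤ ∑ i ∈ Icc u (2 * n), ∑ j ∈ Icc 1 v, B i j)) := by
  constructor
  · intro h
    refine ⟨fun u v hu hun hv1 hv huv => h u v hu huv hv, ?_⟩
    intro u v hv1 hvu hun
    have hu1 : 1 ≤ u := by omega
    set u' := 2 * n + 1 - u with hu'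
    set v' := 2 * n + 1 - v with hv'
    have h1 : 1 ≤ u' := by omega
    have h2 : u' < v' := by omega
    have h3 : v' ≤ 2 * n := by omega
    have eA := corner_reflect n A hA u' v' h1 h2 h3
    have eB := corner_reflect n B hB u' v' h1 h2 h3
    have hu'' : 2 * n + 1 - u' = u := by omega
    have hv'' : 2 * n + 1 - v' = v := by omega
    rw [hu'', hv''] at eA eB
    rw [← eA, ← eB]
    exact h u' v' h1 h2 h3
  · rintro ⟨h1, h2⟩ u v hu huv hv
    by_cases hun : u ≤ n
    · exact h1 u v hu hun (by omega) hv huv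
    · rw [corner_reflect n A hA u v hu huv hv, corner_reflect n B hB u v hu huv hv]
      exact h2 (2 * n + 1 - u) (2 * n + 1 - v) (by omega) (by omega) (by omega)
end

section
/- Let n ≥ 1 and let A, B ∈ Ξ_{2n}. Then A ⪯ B (preorder on 2n×2n matrices) if and only if A† ⪯ B† (preorder on (2n+1)×(2n+1) matrices). -/
open Finset

/-- The entries of the matrix `A† ∈ Ξ_{2n+1}` obtained from `A ∈ Ξ_{2n}` by inserting
a new `(n+1)`-st row and column which are zero except for a `1` at position
`(n+1, n+1)`.  Indices are `1`-based. -/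
def daggerEntry (n : ℕ) (A : ℕ → ℕ → ℕ) : ℕ → ℕ → ℕ := fun i j =>
  if i = n + 1 then (if j = n + 1 then 1 else 0)
  else if j = n + 1 then 0
  else A (if i ≤ n then i else i - 1) (if j ≤ n then j else j - 1)

lemma sum_shift (n : ℕ) (f : ℕ → ℕ) (a b a' b' : ℕ) (ha : 1 ≤ a)
    (ha' : a' = if a ≤ n + 1 then a else a - 1) (hb' : b' = if b ≤ n then b else b - 1) :
    ∑ j ∈ (Icc a b).erase (n + 1), f j
      = ∑ j ∈ Icc a' b', f (if j ≤ n then j else j + 1) := by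
  subst ha' hb'
  refine Finset.sum_nbij' (i := fun j => if j ≤ n then j else j - 1)
    (j := fun k => if k ≤ n then k else k + 1) ?_ ?_ ?_ ?_ ?_ <;>
    intro x hx <;>
    simp only [Finset.mem_erase, Finset.mem_Icc] at hx ⊢
  · split_ifs at hx ⊢ <;> omega
  · split_ifs at hx ⊢ <;> omega
  · split_ifs at hx ⊢ <;> omega
  · split_ifs at hx ⊢ <;> omega
  · congr 1; split_ifs at hx ⊢ <;> omega

lemma dagger_apply (n : ℕ) (M : ℕ → ℕ → ℕ) (i j : ℕ) :
    daggerEntry n M (if i ≤ n then i else i + 1) (if j ≤ n then j else j + 1) = M i j := by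
  have hi : (if i ≤ n then i else i + 1) ≠ n + 1 := by split_ifs <;> omega
  have hj : (if j ≤ n then j else j + 1) ≠ n + 1 := by split_ifs <;> omega
  simp only [daggerEntry, if_neg hi, if_neg hj]
  have e1 : (if (if i ≤ n then i else i + 1) ≤ n then (if i ≤ n then i else i + 1)
      else (if i ≤ n then i else i + 1) - 1) = i := by split_ifs <;> omega
  have e2 : (if (if j ≤ n then j else j + 1) ≤ n then (if j ≤ n then j else j + 1)
      else (if j ≤ n then j else j + 1) - 1) = j := by split_ifs <;> omega
  rw [e1, e2]

lemma dagger_sum (n : ℕ) (M : ℕ → ℕ → ℕ) (u v u' v' : ℕ)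
    (hu : 1 ≤ u) (huv : u < v) (hv : v ≤ 2 * n + 1)
    (hu' : u' = if u ≤ n then u else u - 1) (hv' : v' = if v ≤ n + 1 then v else v - 1) :
    ∑ i ∈ Icc 1 u, ∑ j ∈ Icc v (2 * n + 1), daggerEntry n M i j
      = ∑ i ∈ Icc 1 u', ∑ j ∈ Icc v' (2 * n), M i j := by
  have h1 : ∑ i ∈ Icc 1 u, (∑ j ∈ Icc v (2 * n + 1), daggerEntry n M i j)
      = ∑ i ∈ (Icc 1 u).erase (n + 1), ∑ j ∈ Icc v (2 * n + 1), daggerEntry n M i j := by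
    by_cases hun : u ≤ n
    · rw [Finset.erase_eq_of_notMem]
      simp only [Finset.mem_Icc]; omega
    · refine (Finset.sum_erase _ ?_).symm
      refine Finset.sum_eq_zero fun j hj => ?_
      simp only [Finset.mem_Icc] at hj
      have hjn : j ≠ n + 1 := by omega
      simp [daggerEntry, hjn]
  rw [h1, sum_shift n _ 1 u 1 u' (le_refl 1) (by rw [if_pos (by omega)]) hu']
  refine Finset.sum_congr rfl fun i hi => ?_
  simp only [Finset.mem_Icc] at hi
  have hin : (if i ≤ n then i else i + 1) ≠ n + 1 := by split_ifs <;> omega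
  have hrow : daggerEntry n M (if i ≤ n then i else i + 1) (n + 1) = 0 := by
    simp [daggerEntry, hin]
  rw [← Finset.sum_erase _ hrow,
    sum_shift n _ v (2 * n + 1) v' (2 * n) (by omega) hv' (by rw [if_neg (by omega)]; omega)]
  exact Finset.sum_congr rfl fun j hj => dagger_apply n M i j

/-- For `A, B ∈ Ξ_{2n}`, one has `A ⪯ B` (preorder on `2n × 2n` matrices) if and only
if `A† ⪯ B†` (preorder on `(2n+1) × (2n+1)` matrices). -/
theorem prec_iff_dagger_prec (n : ℕ) (hn : 1 ≤ n) (A B : ℕ → ℕ → ℕ)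
    (hA : ∀ i j, 1 ≤ i → i ≤ 2 * n → 1 ≤ j → j ≤ 2 * n →
      A i j = A (2 * n + 1 - i) (2 * n + 1 - j))
    (hB : ∀ i j, 1 ≤ i → i ≤ 2 * n → 1 ≤ j → j ≤ 2 * n →
      B i j = B (2 * n + 1 - i) (2 * n + 1 - j)) :
    (∀ u v, 1 ≤ u → u < v → v ≤ 2 * n →
        (∑ i ∈ Icc 1 u, ∑ j ∈ Icc v (2 * n), A i j)
          ≤ ∑ i ∈ Icc 1 u, ∑ j ∈ Icc v (2 * n), B i j)
    ↔ (∀ u v, 1 ≤ u → u < v → v ≤ 2 * n + 1 →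
        (∑ i ∈ Icc 1 u, ∑ j ∈ Icc v (2 * n + 1), daggerEntry n A i j)
          ≤ ∑ i ∈ Icc 1 u, ∑ j ∈ Icc v (2 * n + 1), daggerEntry n B i j) := by
  constructor
  · intro h u v hu huv hv
    rw [dagger_sum n A u v (if u ≤ n then u else u - 1) (if v ≤ n + 1 then v else v - 1)
        hu huv hv rfl rfl,
      dagger_sum n B u v (if u ≤ n then u else u - 1) (if v ≤ n + 1 then v else v - 1)
        hu huv hv rfl rfl]
    exact h _ _ (by split_ifs <;> omega) (by split_ifs <;> omega) (by split_ifs <;> omega)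
  · intro h u v hu huv hv
    have key := h (if u ≤ n then u else u + 1) (if v ≤ n + 1 then v else v + 1)
      (by split_ifs <;> omega) (by split_ifs <;> omega) (by split_ifs <;> omega)
    rwa [dagger_sum n A _ _ u v (by split_ifs <;> omega) (by split_ifs <;> omega)
        (by split_ifs <;> omega) (by split_ifs <;> omega) (by split_ifs <;> omega),
      dagger_sum n B _ _ u v (by split_ifs <;> omega) (by split_ifs <;> omega)
        (by split_ifs <;> omega) (by split_ifs <;> omega) (by split_ifs <;> omega)] at key
end

section
/- Let n, r ≥ 1 and λ, μ ∈ Λ(n,r). Let W be the centralizer in the symmetric group on {1,…,2r} of the involution θ_0 : i ↦ 2r+1−i. For ν ∈ Λ(n,r) and i ∈ [1,2n], let R^ν_i = {ν̂_1+⋯+ν̂_{i−1}+1, …, ν̂_1+⋯+ν̂_i} be the i-th block determined by ν̂, and let W_ν = {w ∈ W : w(R^ν_i) = R^ν_i for all i ∈ [1,2n]}, a subgroup of W. For w ∈ W define the 2n×2n matrix A(w) by A(w)_{i,j} = #{l ∈ R^μ_j : w(l) ∈ R^λ_i}. Then: (a) A(w) ∈ Ξ_{2n,2r} with ro(A(w))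 = λ̂ and co(A(w)) = μ̂; (b) A(w) depends only on the double coset W_λ w W_μ; and (c) the induced map from the set of double cosets W_λ\W/W_μ to {A ∈ Ξ_{2n,2r} : ro(A) = λ̂, co(A) = μ̂} is a bijection. -/
open Finset

/-- The palindromically doubled vector `ν̂ = (ν_1, …, ν_n, ν_n, …, ν_1)`,
in `0`-based indexing. -/
def hatVec {n : ℕ} (l : Fin n → ℕ) : Fin (2 * n) → ℕ := fun i =>
  if h : (i : ℕ) < n then l ⟨i, h⟩
  else l ⟨2 * n - 1 - (i : ℕ), by have := i.isLt; omega⟩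

/-- The partial sum `ν̂_1 + ⋯ + ν̂_{i-1}` of the doubled vector. -/
def psum {n : ℕ} (ν : Fin n → ℕ) (i : Fin (2 * n)) : ℕ :=
  ∑ j ∈ Finset.Iio i, hatVec ν j

/-- `l` lies in the `i`-th block `R^ν_i = {ν̂_1+⋯+ν̂_{i-1}+1, …, ν̂_1+⋯+ν̂_i}`
(here in `0`-based indexing of `{1, …, 2r}`). -/
def inBlock {n r : ℕ} (ν : Fin n → ℕ) (i : Fin (2 * n)) (l : Fin (2 * r)) : Prop :=
  psum ν i ≤ (l : ℕ) ∧ (l : ℕ) < psum ν i + hatVec ν i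

instance {n r : ℕ} (ν : Fin n → ℕ) (i : Fin (2 * n)) (l : Fin (2 * r)) :
    Decidable (inBlock ν i l) :=
  inferInstanceAs (Decidable (_ ∧ _))

/-- The matrix `A(w)` with `A(w)_{i,j} = #{l ∈ R^μ_j : w(l) ∈ R^λ_i}`. -/
def dcMatrix {n r : ℕ} (lam mu : Fin n → ℕ) (w : Equiv.Perm (Fin (2 * r))) :
    Fin (2 * n) → Fin (2 * n) → ℕ := fun i j =>
  (Finset.univ.filter (fun l : Fin (2 * r) => inBlock mu j l ∧ inBlock lam i (w l))).card

/-- `w` lies in `W`, the centralizer in the symmetric group of `θ_0 : i ↦ 2r+1-i`. -/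
def inW {r : ℕ} (w : Equiv.Perm (Fin (2 * r))) : Prop :=
  ∀ l : Fin (2 * r), w l.rev = (w l).rev

/-- `w` lies in the parabolic subgroup `W_ν` of `W` stabilizing every block `R^ν_i`. -/
def inWpar {n r : ℕ} (ν : Fin n → ℕ) (w : Equiv.Perm (Fin (2 * r))) : Prop :=
  inW w ∧ ∀ (i : Fin (2 * n)) (l : Fin (2 * r)), inBlock ν i l → inBlock ν i (w l)

namespace DC

variable {m : ℕ}

def fps (v : Fin m → ℕ) (i : Fin m) : ℕ := ∑ j ∈ Finset.Iio i, v j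

def vBlock (v : Fin m → ℕ) (i : Fin m) (k : ℕ) : Prop :=
  fps v i ≤ k ∧ k < fps v i + v i

lemma fps_insert_eq {v : Fin m → ℕ} (i : Fin m) :
    ∑ j ∈ insert i (Finset.Iio i), v j = fps v i + v i := by
  rw [Finset.sum_insert (by simp), fps, add_comm]

lemma fps_lt_le {v : Fin m → ℕ} {i i' : Fin m} (h : i < i') :
    fps v i + v i ≤ fps v i' := by
  have hsub : insert i (Finset.Iio i) ⊆ Finset.Iio i' := by
    intro x hx
    simp only [Finset.mem_insert, Finset.mem_Iio] at hx ⊢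
    rcases hx with rfl | hx
    · exact h
    · exact hx.trans h
  rw [← fps_insert_eq]
  exact Finset.sum_le_sum_of_subset hsub

lemma fps_add_le_total {v : Fin m → ℕ} (i : Fin m) :
    fps v i + v i ≤ ∑ j, v j := by
  rw [← fps_insert_eq]
  exact Finset.sum_le_sum_of_subset (Finset.subset_univ _)

lemma vBlock_unique {v : Fin m → ℕ} {i i' : Fin m} {k : ℕ}
    (h : vBlock v i k) (h' : vBlock v i' k) : i = i' := by
  by_contra hne
  rcases lt_or_gt_of_ne hne with hlt | hlt
  · have := fps_lt_le (v := v) hlt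
    have h2 := h.2; have h1 := h'.1; omega
  · have := fps_lt_le (v := v) hlt
    have h2 := h'.2; have h1 := h.1; omega

lemma fps_succ {v : Fin m → ℕ} {i : Fin m} (h : (i : ℕ) + 1 < m) :
    fps v ⟨(i : ℕ) + 1, h⟩ = fps v i + v i := by
  have heq : Finset.Iio (⟨(i : ℕ) + 1, h⟩ : Fin m) = insert i (Finset.Iio i) := by
    ext j
    simp only [Finset.mem_Iio, Finset.mem_insert, Fin.lt_def, Fin.ext_iff]
    omega
  rw [fps, heq, fps_insert_eq]

lemma vBlock_exists {v : Fin m → ℕ} {k : ℕ} (hm : 0 < m) (hk : k < ∑ j, v j) :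
    ∃ i, vBlock v i k := by
  classical
  set s : Finset (Fin m) := Finset.univ.filter (fun i => fps v i ≤ k) with hs
  have h0 : (⟨0, hm⟩ : Fin m) ∈ s := by
    have he : Finset.Iio (⟨0, hm⟩ : Fin m) = ∅ := by
      ext j; simp [Fin.lt_def]
    rw [hs, Finset.mem_filter, fps, he, Finset.sum_empty]
    exact ⟨Finset.mem_univ _, Nat.zero_le _⟩
  have hne : s.Nonempty := ⟨_, h0⟩
  refine ⟨s.max' hne, (Finset.mem_filter.mp (s.max'_mem hne)).2, ?_⟩
  by_contra hcon
  push_neg at hcon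
  by_cases hlast : ((s.max' hne : Fin m) : ℕ) + 1 < m
  · have hmem : (⟨(s.max' hne : ℕ) + 1, hlast⟩ : Fin m) ∈ s := by
      simp only [hs, Finset.mem_filter]
      exact ⟨Finset.mem_univ _, by rw [fps_succ]; exact hcon⟩
    have := s.le_max' _ hmem
    simp [Fin.le_def] at this
  · have huniv : Finset.univ = insert (s.max' hne) (Finset.Iio (s.max' hne)) := by
      ext j
      simp only [Finset.mem_univ, Finset.mem_insert, Finset.mem_Iio, true_iff,
        Fin.ext_iff, Fin.lt_def]
      have := j.isLt; have := (s.max' hne).isLt; omega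
    have : ∑ j, v j = fps v (s.max' hne) + v (s.max' hne) := by
      rw [huniv, fps_insert_eq]
    omega

open Classical in
noncomputable def vIdx (hm : 0 < m) (v : Fin m → ℕ) (k : ℕ) : Fin m :=
  if h : ∃ i, vBlock v i k then h.choose else ⟨0, hm⟩

lemma vIdx_spec (hm : 0 < m) {v : Fin m → ℕ} {k : ℕ} (hk : k < ∑ j, v j) :
    vBlock v (vIdx hm v k) k := by
  have h : ∃ i, vBlock v i k := vBlock_exists hm hk
  rw [vIdx, dif_pos h]
  exact h.choose_spec

lemma vIdx_eq_iff (hm : 0 < m) {v : Fin m → ℕ} {k : ℕ} (hk : k < ∑ j, v j) {i : Fin m} :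
    vIdx hm v k = i ↔ vBlock v i k := by
  constructor
  · rintro rfl; exact vIdx_spec hm hk
  · intro h; exact vBlock_unique (vIdx_spec hm hk) h

lemma card_filter_interval {N a b : ℕ} (hb : b ≤ N) :
    (Finset.univ.filter (fun l : Fin N => a ≤ (l : ℕ) ∧ (l : ℕ) < b)).card = b - a := by
  rw [← Nat.card_Ico a b]
  refine Finset.card_bij (fun l _ => (l : ℕ)) ?_ ?_ ?_
  · intro l hl
    simp only [Finset.mem_filter] at hl
    simp only [Finset.mem_Ico]
    exact hl.2
  · intro l _ l' _ h
    exact Fin.val_injective h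
  · intro k hk
    simp only [Finset.mem_Ico] at hk
    exact ⟨⟨k, by omega⟩, by simp [hk.1, hk.2], rfl⟩

/-! ### hatVec lemmas -/

def nv {m : ℕ} (v : Fin m → ℕ) : ℕ → ℕ := fun k => if h : k < m then v ⟨k, h⟩ else 0

lemma sum_univ_eq_sum_range_nv {m : ℕ} (v : Fin m → ℕ) :
    ∑ i, v i = ∑ k ∈ Finset.range m, nv v k := by
  rw [← Fin.sum_univ_eq_sum_range]
  apply Finset.sum_congr rfl
  intro i _
  simp [nv, i.isLt]

lemma nv_hatVec_lt {n : ℕ} (ν : Fin n → ℕ) {k : ℕ} (h : k < n) :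
    nv (hatVec ν) k = nv ν k := by
  have h2 : k < 2 * n := by omega
  simp only [nv, dif_pos h2, dif_pos h, hatVec]

lemma nv_hatVec_ge {n : ℕ} (ν : Fin n → ℕ) {k : ℕ} (hk : n ≤ k) (h2 : k < 2 * n) :
    nv (hatVec ν) k = nv ν (2 * n - 1 - k) := by
  have h3 : 2 * n - 1 - k < n := by omega
  simp only [nv, dif_pos h2, dif_pos h3, hatVec]
  rw [dif_neg (by omega)]

lemma sum_hatVec {n : ℕ} (ν : Fin n → ℕ) : ∑ i, hatVec ν i = 2 * ∑ i, ν i := by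
  rw [sum_univ_eq_sum_range_nv, sum_univ_eq_sum_range_nv]
  have hsplit : Finset.range (2 * n) = Finset.Ico 0 (2 * n) := by
    rw [Finset.range_eq_Ico]
  rw [hsplit, ← Finset.sum_Ico_consecutive _ (by omega : 0 ≤ n) (by omega : n ≤ 2 * n),
    ← Finset.range_eq_Ico]
  have h1 : ∑ k ∈ Finset.range n, nv (hatVec ν) k = ∑ k ∈ Finset.range n, nv ν k := by
    apply Finset.sum_congr rfl
    intro k hk
    exact nv_hatVec_lt ν (Finset.mem_range.mp hk)
  have h2 : ∑ k ∈ Finset.Ico n (2 * n), nv (hatVec ν) k = ∑ k ∈ Finset.range n, nv ν k := by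
    rw [Finset.sum_Ico_eq_sum_range]
    have : 2 * n - n = n := by omega
    rw [this]
    rw [← Finset.sum_range_reflect (fun k => nv ν k) n]
    apply Finset.sum_congr rfl
    intro k hk
    have hk' := Finset.mem_range.mp hk
    rw [nv_hatVec_ge ν (by omega) (by omega)]
    congr 1
    omega
  rw [h1, h2]
  omega

lemma sum_hatVec_half {n : ℕ} (ν : Fin n → ℕ) :
    ∑ i ∈ Finset.univ.filter (fun i : Fin (2 * n) => (i : ℕ) < n), hatVec ν i
      = ∑ i, ν i := by
  classical
  rw [Finset.sum_filter]
  have h1 : ∑ i : Fin (2 * n), (if (i : ℕ) < n then hatVec ν i else 0)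
      = ∑ k ∈ Finset.range (2 * n), (if k < n then nv (hatVec ν) k else 0) := by
    rw [← Fin.sum_univ_eq_sum_range]
    apply Finset.sum_congr rfl
    intro i _
    by_cases h : (i : ℕ) < n
    · rw [if_pos h, if_pos h]
      simp [nv, i.isLt]
    · rw [if_neg h, if_neg h]
  rw [h1, ← Finset.sum_filter]
  have h2 : (Finset.range (2 * n)).filter (fun k => k < n) = Finset.range n := by
    ext k
    simp only [Finset.mem_filter, Finset.mem_range]
    omega
  rw [h2, sum_univ_eq_sum_range_nv]
  apply Finset.sum_congr rfl
  intro k hk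
  exact nv_hatVec_lt ν (Finset.mem_range.mp hk)

lemma hatVec_rev {n : ℕ} (ν : Fin n → ℕ) (i : Fin (2 * n)) :
    hatVec ν i.rev = hatVec ν i := by
  have hi := i.isLt
  have hrev : ((i.rev : Fin (2 * n)) : ℕ) = 2 * n - 1 - (i : ℕ) := by
    rw [Fin.val_rev]; omega
  rcases Nat.lt_or_ge (i : ℕ) n with h | h
  · have h2 : ¬ ((i.rev : ℕ) < n) := by omega
    simp only [hatVec]
    rw [dif_neg h2, dif_pos h]
    congr 1
    apply Fin.ext
    simp only [hrev]
    omega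
  · have h2 : (i.rev : ℕ) < n := by omega
    simp only [hatVec]
    rw [dif_pos h2, dif_neg (by omega : ¬ (i : ℕ) < n)]
    congr 1
    apply Fin.ext
    simp only [hrev]

lemma sum_Iio_rev {m : ℕ} (v : Fin m → ℕ) (i : Fin m) :
    ∑ j ∈ Finset.Iio i.rev, v j = ∑ j ∈ Finset.Ioi i, v j.rev := by
  apply Finset.sum_nbij' (fun j => Fin.rev j) (fun j => Fin.rev j)
  · intro a ha
    simp only [Finset.mem_Iio] at ha
    simp only [Finset.mem_Ioi]
    rw [← Fin.rev_rev i]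
    exact Fin.rev_lt_rev.mpr ha
  · intro a ha
    simp only [Finset.mem_Ioi] at ha
    simp only [Finset.mem_Iio]
    exact Fin.rev_lt_rev.mpr (by simpa using ha)
  · intro a _; exact Fin.rev_rev a
  · intro a _; exact Fin.rev_rev a
  · intro a _; rw [Fin.rev_rev]

lemma sum_three {m : ℕ} (v : Fin m → ℕ) (i : Fin m) :
    ∑ j, v j = fps v i + v i + ∑ j ∈ Finset.Ioi i, v j := by
  have huniv : (Finset.univ : Finset (Fin m)) = insert i (Finset.Iio i) ∪ Finset.Ioi i := by
    ext j
    simp only [Finset.mem_univ, Finset.mem_union, Finset.mem_insert, Finset.mem_Iio,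
      Finset.mem_Ioi, true_iff, Fin.lt_def, Fin.ext_iff]
    omega
  have hdisj : Disjoint (insert i (Finset.Iio i)) (Finset.Ioi i) := by
    rw [Finset.disjoint_left]
    intro j hj hj'
    simp only [Finset.mem_insert, Finset.mem_Iio] at hj
    simp only [Finset.mem_Ioi] at hj'
    rcases hj with rfl | hj
    · exact lt_irrefl _ hj'
    · exact absurd (hj.trans hj') (lt_irrefl _)
  rw [huniv, Finset.sum_union hdisj, fps_insert_eq]

lemma psum_rev_add {n : ℕ} (ν : Fin n → ℕ) (i : Fin (2 * n)) :
    psum ν i + hatVec ν i + psum ν i.rev = ∑ j, hatVec ν j := by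
  have h1 : psum ν i.rev = ∑ j ∈ Finset.Ioi i, hatVec ν j := by
    rw [psum, sum_Iio_rev]
    exact Finset.sum_congr rfl (fun j _ => hatVec_rev ν j)
  rw [h1]
  exact (sum_three (hatVec ν) i).symm

lemma inBlock_rev {n r : ℕ} {ν : Fin n → ℕ} (hν : ∑ i, ν i = r) (i : Fin (2 * n))
    (l : Fin (2 * r)) : inBlock ν i l ↔ inBlock ν i.rev l.rev := by
  have h1 := psum_rev_add ν i
  have h2 := sum_hatVec ν
  rw [hν] at h2
  have h3 := hatVec_rev ν i
  have h4 : ((l.rev : Fin (2 * r)) : ℕ) = 2 * r - 1 - (l : ℕ) := by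
    rw [Fin.val_rev]; omega
  have h5 := l.isLt
  unfold inBlock
  rw [h3, h4]
  omega

/-! ### blockOf -/

lemma psum_eq_fps {n : ℕ} (ν : Fin n → ℕ) (i : Fin (2 * n)) :
    psum ν i = fps (hatVec ν) i := rfl

lemma inBlock_iff_vBlock {n r : ℕ} (ν : Fin n → ℕ) (i : Fin (2 * n)) (l : Fin (2 * r)) :
    inBlock ν i l ↔ vBlock (hatVec ν) i (l : ℕ) := Iff.rfl

lemma inBlock_unique {n r : ℕ} {ν : Fin n → ℕ} {i i' : Fin (2 * n)} {l : Fin (2 * r)}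
    (h : inBlock ν i l) (h' : inBlock ν i' l) : i = i' :=
  vBlock_unique ((inBlock_iff_vBlock ν i l).mp h) ((inBlock_iff_vBlock ν i' l).mp h')

lemma val_lt_sum_hatVec {n r : ℕ} (ν : Fin n → ℕ) (hν : ∑ i, ν i = r) (l : Fin (2 * r)) :
    (l : ℕ) < ∑ j, hatVec ν j := by
  rw [sum_hatVec, hν]; exact l.isLt

noncomputable def blockOf {n r : ℕ} (hn : 1 ≤ n) (ν : Fin n → ℕ) (hν : ∑ i, ν i = r)
    (l : Fin (2 * r)) : Fin (2 * n) :=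
  vIdx (by omega) (hatVec ν) (l : ℕ)

lemma blockOf_spec {n r : ℕ} (hn : 1 ≤ n) (ν : Fin n → ℕ) (hν : ∑ i, ν i = r)
    (l : Fin (2 * r)) : inBlock ν (blockOf hn ν hν l) l :=
  vIdx_spec _ (val_lt_sum_hatVec ν hν l)

lemma blockOf_eq_iff {n r : ℕ} (hn : 1 ≤ n) (ν : Fin n → ℕ) (hν : ∑ i, ν i = r)
    {l : Fin (2 * r)} {i : Fin (2 * n)} :
    blockOf hn ν hν l = i ↔ inBlock ν i l :=
  vIdx_eq_iff _ (val_lt_sum_hatVec ν hν l)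

lemma blockOf_rev {n r : ℕ} (hn : 1 ≤ n) (ν : Fin n → ℕ) (hν : ∑ i, ν i = r)
    (l : Fin (2 * r)) : blockOf hn ν hν l.rev = (blockOf hn ν hν l).rev := by
  rw [blockOf_eq_iff]
  exact (inBlock_rev hν _ l).mp (blockOf_spec hn ν hν l)

lemma psum_add_hatVec_le {n r : ℕ} {ν : Fin n → ℕ} (hν : ∑ i, ν i = r) (i : Fin (2 * n)) :
    psum ν i + hatVec ν i ≤ 2 * r := by
  have h := fps_add_le_total (v := hatVec ν) i
  rw [sum_hatVec, hν] at h
  exact h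

lemma card_inBlock {n r : ℕ} {ν : Fin n → ℕ} (hν : ∑ i, ν i = r) (i : Fin (2 * n)) :
    (Finset.univ.filter (fun l : Fin (2 * r) => inBlock ν i l)).card = hatVec ν i := by
  classical
  have hb := psum_add_hatVec_le hν i
  have heq : (Finset.univ.filter (fun l : Fin (2 * r) => inBlock ν i l))
      = (Finset.univ.filter
          (fun l : Fin (2 * r) => psum ν i ≤ (l : ℕ) ∧ (l : ℕ) < psum ν i + hatVec ν i)) := by
    apply Finset.filter_congr
    intro l _
    exact Iff.rfl
  rw [heq, card_filter_interval hb]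
  omega

lemma psum_half_le {n r : ℕ} {ν : Fin n → ℕ} (hν : ∑ i, ν i = r) {j : Fin (2 * n)}
    (hj : (j : ℕ) < n) : psum ν j + hatVec ν j ≤ r := by
  classical
  have hsub : insert j (Finset.Iio j) ⊆
      Finset.univ.filter (fun i : Fin (2 * n) => (i : ℕ) < n) := by
    intro x hx
    simp only [Finset.mem_insert, Finset.mem_Iio] at hx
    simp only [Finset.mem_filter, Finset.mem_univ, true_and]
    rcases hx with rfl | hx
    · exact hj
    · have := (Fin.lt_def.mp hx); omega
  have h := Finset.sum_le_sum_of_subset (f := hatVec ν) hsub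
  rw [fps_insert_eq, sum_hatVec_half, hν] at h
  exact h

lemma psum_half_ge {n r : ℕ} {ν : Fin n → ℕ} (hν : ∑ i, ν i = r) {j : Fin (2 * n)}
    (hj : n ≤ (j : ℕ)) : r ≤ psum ν j := by
  classical
  have hsub : Finset.univ.filter (fun i : Fin (2 * n) => (i : ℕ) < n) ⊆ Finset.Iio j := by
    intro x hx
    simp only [Finset.mem_filter, Finset.mem_univ, true_and] at hx
    simp only [Finset.mem_Iio, Fin.lt_def]
    omega
  have h := Finset.sum_le_sum_of_subset (f := hatVec ν) hsub
  rw [sum_hatVec_half, hν] at h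
  exact h

lemma inBlock_lt_half {n r : ℕ} {ν : Fin n → ℕ} (hν : ∑ i, ν i = r) {j : Fin (2 * n)}
    {l : Fin (2 * r)} (h : inBlock ν j l) (hj : (j : ℕ) < n) : (l : ℕ) < r := by
  have := psum_half_le hν hj
  have h2 := h.2
  omega

lemma inBlock_half_lt {n r : ℕ} {ν : Fin n → ℕ} (hν : ∑ i, ν i = r) {j : Fin (2 * n)}
    {l : Fin (2 * r)} (h : inBlock ν j l) (hl : (l : ℕ) < r) : (j : ℕ) < n := by
  by_contra hc
  have := psum_half_ge hν (by omega : n ≤ (j : ℕ))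
  have h1 := h.1
  omega

/-! ### The matching lemma -/

section Matching

variable {r : ℕ} {T : Type} [DecidableEq T]

/-- For `f g : Fin (2r) → T` with equinumerous fibers, the canonical rank-preserving
matching sending the `k`-th element of each fiber of `f` to the `k`-th element of the
corresponding fiber of `g`. -/
noncomputable def mtch (f g : Fin (2 * r) → T)
    (hc : ∀ t, (Finset.univ.filter (fun l => f l = t)).card
        = (Finset.univ.filter (fun l => g l = t)).card)
    (l : Fin (2 * r)) : Fin (2 * r) :=
  ((Finset.univ.filter (fun x => g x = f l)).orderIsoOfFin (hc (f l)).symm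
    (((Finset.univ.filter (fun x => f x = f l)).orderIsoOfFin rfl).symm
      ⟨l, by simp⟩) : Fin (2 * r))

variable {f g : Fin (2 * r) → T}
    {hc : ∀ t, (Finset.univ.filter (fun l => f l = t)).card
        = (Finset.univ.filter (fun l => g l = t)).card}

lemma mtch_eq (t : T) (l : Fin (2 * r)) (hl : l ∈ Finset.univ.filter (fun x => f x = t)) :
    mtch f g hc l =
      (((Finset.univ.filter (fun x => g x = t)).orderIsoOfFin (hc t).symm
        (((Finset.univ.filter (fun x => f x = t)).orderIsoOfFin rfl).symm
          ⟨l, hl⟩)) : Fin (2 * r)) := by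
  have h : f l = t := by simpa using hl
  subst h
  rfl

lemma g_mtch (l : Fin (2 * r)) : g (mtch f g hc l) = f l := by
  have h := (((Finset.univ.filter (fun x => g x = f l))).orderIsoOfFin (hc (f l)).symm
    (((Finset.univ.filter (fun x => f x = f l)).orderIsoOfFin rfl).symm ⟨l, by simp⟩)).2
  simp only [Finset.mem_filter] at h
  exact h.2

lemma mtch_injective : Function.Injective (mtch f g hc) := by
  intro l l' h
  have ht : f l = f l' := by
    rw [← g_mtch (hc := hc) l, ← g_mtch (hc := hc) l', h]
  have hl : l ∈ Finset.univ.filter (fun x => f x = f l) := by simp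
  have hl' : l' ∈ Finset.univ.filter (fun x => f x = f l) := by simp [ht.symm]
  rw [mtch_eq (f l) l hl, mtch_eq (f l) l' hl'] at h
  have h1 := Subtype.coe_injective h
  have h2 := ((Finset.univ.filter (fun x => g x = f l)).orderIsoOfFin
    (hc (f l)).symm).injective h1
  have h3 := (((Finset.univ.filter (fun x => f x = f l)).orderIsoOfFin
    rfl)).symm.injective h2
  exact congrArg Subtype.val h3

lemma mtch_strictMonoOn (t : T) (l l' : Fin (2 * r))
    (hl : l ∈ Finset.univ.filter (fun x => f x = t))
    (hl' : l' ∈ Finset.univ.filter (fun x => f x = t)) (hll : l < l') :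
    mtch f g hc l < mtch f g hc l' := by
  rw [mtch_eq t l hl, mtch_eq t l' hl']
  have h1 : (⟨l, hl⟩ : {x // x ∈ Finset.univ.filter (fun x => f x = t)}) < ⟨l', hl'⟩ :=
    Subtype.mk_lt_mk.mpr hll
  have h2 := ((Finset.univ.filter (fun x => f x = t)).orderIsoOfFin rfl).symm.strictMono h1
  have h3 := ((Finset.univ.filter (fun x => g x = t)).orderIsoOfFin (hc t).symm).strictMono h2
  exact h3

lemma mtch_rev (τ : T → T) (hτ : ∀ t, τ (τ t) = t)
    (hf : ∀ l, f (l.rev) = τ (f l)) (hg : ∀ l, g (l.rev) = τ (g l)) (l : Fin (2 * r)) :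
    mtch f g hc l = (mtch f g hc l.rev).rev := by
  classical
  set t := f l with ht
  set e := (Finset.univ.filter (fun x => f x = t)).orderEmbOfFin rfl with he
  have hmemF : ∀ x : Fin (2 * r), f x = t → x ∈ Finset.univ.filter (fun y => f y = t) := by
    intro x hx; simp [hx]
  have hmemrev : ∀ x : Fin (2 * r), f x = t →
      x.rev ∈ Finset.univ.filter (fun y => f y = τ t) := by
    intro x hx; simp [hf, hx]
  have hmemG : ∀ (s : T) (x : Fin (2 * r)), g x = s →
      x ∈ Finset.univ.filter (fun y => g y = s) := by
    intro s x hx; simp [hx]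
  have he_mem : ∀ k, f (e k) = t := by
    intro k
    have h := Finset.orderEmbOfFin_mem (Finset.univ.filter (fun x => f x = t)) rfl k
    simp only [Finset.mem_filter] at h
    exact h.2
  -- both candidate maps agree with the canonical parametrization of the G-fiber
  have hu1 : (fun k => mtch f g hc (e k))
      = (Finset.univ.filter (fun x => g x = t)).orderEmbOfFin (hc t).symm := by
    apply Finset.orderEmbOfFin_unique
    · intro k
      exact hmemG t _ (by rw [g_mtch (hc := hc)]; exact he_mem k)
    · intro k k' hk
      exact mtch_strictMonoOn t _ _ (hmemF _ (he_mem k)) (hmemF _ (he_mem k'))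
        (e.strictMono hk)
  have hu2 : (fun k => (mtch f g hc (e k).rev).rev)
      = (Finset.univ.filter (fun x => g x = t)).orderEmbOfFin (hc t).symm := by
    apply Finset.orderEmbOfFin_unique
    · intro k
      refine hmemG t _ ?_
      rw [hg, g_mtch (hc := hc), hf, he_mem k, hτ]
    · intro k k' hk
      have h1 : (e k').rev < (e k).rev := Fin.rev_lt_rev.mpr (e.strictMono hk)
      have h2 := mtch_strictMonoOn (hc := hc) (τ t) _ _ (hmemrev _ (he_mem k'))
        (hmemrev _ (he_mem k)) h1
      exact Fin.rev_lt_rev.mpr h2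
  have hl : l ∈ Finset.univ.filter (fun x => f x = t) := hmemF l rfl
  obtain ⟨k, hk⟩ : ∃ k, e k = l := by
    have hrange : l ∈ Set.range e := by
      rw [he, Finset.range_orderEmbOfFin]
      exact_mod_cast hl
    exact hrange
  rw [← hk]
  calc mtch f g hc (e k)
      = (Finset.univ.filter (fun x => g x = t)).orderEmbOfFin (hc t).symm k :=
        congrFun hu1 k
    _ = (mtch f g hc (e k).rev).rev := (congrFun hu2 k).symm

lemma matching (τ : T → T) (hτ : ∀ t, τ (τ t) = t)
    (f g : Fin (2 * r) → T)
    (hf : ∀ l, f (l.rev) = τ (f l)) (hg : ∀ l, g (l.rev) = τ (g l))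
    (hc : ∀ t, (Finset.univ.filter (fun l => f l = t)).card
        = (Finset.univ.filter (fun l => g l = t)).card) :
    ∃ w : Equiv.Perm (Fin (2 * r)), inW w ∧ ∀ l, g (w l) = f l := by
  classical
  have bij : Function.Bijective (mtch f g hc) :=
    Finite.injective_iff_bijective.mp (mtch_injective (hc := hc))
  refine ⟨Equiv.ofBijective _ bij, ?_, ?_⟩
  · intro l
    show mtch f g hc l.rev = (mtch f g hc l).rev
    rw [mtch_rev (hc := hc) τ hτ hf hg l, Fin.rev_rev]
  · intro l
    exact g_mtch (hc := hc) l

end Matching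

/-! ### Parts (a) and (b) -/

section Parts

variable {n r : ℕ} {lam mu : Fin n → ℕ}

lemma card_perm_inBlock {w : Equiv.Perm (Fin (2 * r))} {ν : Fin n → ℕ} (hν : ∑ i, ν i = r)
    (i : Fin (2 * n)) :
    (Finset.univ.filter (fun l : Fin (2 * r) => inBlock ν i (w l))).card = hatVec ν i := by
  classical
  rw [← card_inBlock hν i]
  refine Finset.card_nbij' (fun l => w l) (fun l => w.symm l) ?_ ?_ ?_ ?_
  · intro l hl
    simp only [Finset.mem_coe, Finset.mem_filter, Finset.mem_univ, true_and] at hl ⊢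
    exact hl
  · intro l hl
    simp only [Finset.mem_coe, Finset.mem_filter, Finset.mem_univ, true_and] at hl ⊢
    simpa using hl
  · intro l _; simp
  · intro l _; simp

lemma dc_row_sum (hn : 1 ≤ n) (hmu : ∑ i, mu i = r) (hlam : ∑ i, lam i = r)
    (w : Equiv.Perm (Fin (2 * r))) (i : Fin (2 * n)) :
    ∑ j, dcMatrix lam mu w i j = hatVec lam i := by
  classical
  have heach : ∀ j : Fin (2 * n),
      dcMatrix lam mu w i j
      = ((Finset.univ.filter (fun l : Fin (2 * r) => inBlock lam i (w l))).filter
          (fun l => blockOf hn mu hmu l = j)).card := by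
    intro j
    simp only [dcMatrix]
    congr 1
    ext l
    simp only [Finset.mem_filter, Finset.mem_univ, true_and, blockOf_eq_iff]
    tauto
  have hfib := Finset.card_eq_sum_card_fiberwise
    (f := fun l => blockOf hn mu hmu l)
    (s := Finset.univ.filter (fun l : Fin (2 * r) => inBlock lam i (w l)))
    (t := Finset.univ) (fun x _ => Finset.mem_univ _)
  calc ∑ j, dcMatrix lam mu w i j
      = ∑ j, ((Finset.univ.filter (fun l : Fin (2 * r) => inBlock lam i (w l))).filter
          (fun l => blockOf hn mu hmu l = j)).card := Finset.sum_congr rfl (fun j _ => heach j)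
    _ = (Finset.univ.filter (fun l : Fin (2 * r) => inBlock lam i (w l))).card := hfib.symm
    _ = hatVec lam i := card_perm_inBlock hlam i

lemma dc_col_sum (hn : 1 ≤ n) (hmu : ∑ i, mu i = r) (hlam : ∑ i, lam i = r)
    (w : Equiv.Perm (Fin (2 * r))) (j : Fin (2 * n)) :
    ∑ i, dcMatrix lam mu w i j = hatVec mu j := by
  classical
  have heach : ∀ i : Fin (2 * n),
      dcMatrix lam mu w i j
      = ((Finset.univ.filter (fun l : Fin (2 * r) => inBlock mu j l)).filter
          (fun l => blockOf hn lam hlam (w l) = i)).card := by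
    intro i
    simp only [dcMatrix]
    congr 1
    ext l
    simp only [Finset.mem_filter, Finset.mem_univ, true_and, blockOf_eq_iff]
  have hfib := Finset.card_eq_sum_card_fiberwise
    (f := fun l => blockOf hn lam hlam (w l))
    (s := Finset.univ.filter (fun l : Fin (2 * r) => inBlock mu j l))
    (t := Finset.univ) (fun x _ => Finset.mem_univ _)
  calc ∑ i, dcMatrix lam mu w i j
      = ∑ i, ((Finset.univ.filter (fun l : Fin (2 * r) => inBlock mu j l)).filter
          (fun l => blockOf hn lam hlam (w l) = i)).card :=
        Finset.sum_congr rfl (fun i _ => heach i)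
    _ = (Finset.univ.filter (fun l : Fin (2 * r) => inBlock mu j l)).card := hfib.symm
    _ = hatVec mu j := card_inBlock hmu j

lemma dc_symm (hmu : ∑ i, mu i = r) (hlam : ∑ i, lam i = r)
    {w : Equiv.Perm (Fin (2 * r))} (hw : inW w) (i j : Fin (2 * n)) :
    dcMatrix lam mu w i j = dcMatrix lam mu w i.rev j.rev := by
  classical
  simp only [dcMatrix]
  refine Finset.card_nbij' (fun l => l.rev) (fun l => l.rev) ?_ ?_ (by intro l _; simp) (by intro l _; simp)
  · intro l hl
    simp only [Finset.mem_coe, Finset.mem_filter, Finset.mem_univ, true_and] at hl ⊢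
    obtain ⟨h1, h2⟩ := hl
    refine ⟨(inBlock_rev hmu j l).mp h1, ?_⟩
    rw [hw l]
    exact (inBlock_rev hlam i (w l)).mp h2
  · intro l hl
    simp only [Finset.mem_coe, Finset.mem_filter, Finset.mem_univ, true_and] at hl ⊢
    obtain ⟨h1, h2⟩ := hl
    constructor
    · have := (inBlock_rev hmu j.rev l).mp h1
      rwa [Fin.rev_rev] at this
    · have := (inBlock_rev hlam i.rev (w l)).mp h2
      rw [Fin.rev_rev] at this
      rw [hw l]
      exact this

lemma inBlock_perm_iff (hn : 1 ≤ n) {ν : Fin n → ℕ} (hν : ∑ i, ν i = r) {y : Equiv.Perm (Fin (2 * r))}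
    (hy : inWpar ν y) (j : Fin (2 * n)) (l : Fin (2 * r)) :
    inBlock ν j (y l) ↔ inBlock ν j l := by
  constructor
  · intro h
    have h' := blockOf_spec hn ν hν l
    have h'' := hy.2 _ l h'
    have heq := inBlock_unique h h''
    rw [heq]
    exact h'
  · exact hy.2 j l

lemma dc_coset (hn : 1 ≤ n) (hmu : ∑ i, mu i = r) (hlam : ∑ i, lam i = r)
    (w x y : Equiv.Perm (Fin (2 * r)))
    (hx : inWpar lam x) (hy : inWpar mu y) :
    dcMatrix lam mu (x * w * y) = dcMatrix lam mu w := by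
  classical
  funext i j
  simp only [dcMatrix]
  have happ : ∀ l, (x * w * y) l = x (w (y l)) := by
    intro l; simp [Equiv.Perm.mul_apply]
  refine Finset.card_nbij' (fun l => y l) (fun l => y.symm l) ?_ ?_ (by intro l _; simp) (by intro l _; simp)
  · intro l hl
    simp only [Finset.mem_coe, Finset.mem_filter, Finset.mem_univ, true_and] at hl ⊢
    obtain ⟨h1, h2⟩ := hl
    rw [happ] at h2
    exact ⟨(inBlock_perm_iff hn hmu hy j l).mpr h1,
      (inBlock_perm_iff hn hlam hx i _).mp h2⟩
  · intro l hl
    simp only [Finset.mem_coe, Finset.mem_filter, Finset.mem_univ, true_and] at hl ⊢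
    obtain ⟨h1, h2⟩ := hl
    constructor
    · have h3 := inBlock_perm_iff hn hmu hy j (y.symm l)
      rw [Equiv.apply_symm_apply] at h3
      exact h3.mp h1
    · rw [happ, Equiv.apply_symm_apply]
      exact (inBlock_perm_iff hn hlam hx i _).mpr h2

lemma inW_mul {r : ℕ} {w y : Equiv.Perm (Fin (2 * r))} (hw : inW w) (hy : inW y) :
    inW (w * y) := by
  intro l
  simp only [Equiv.Perm.mul_apply, hy l, hw (y l)]

lemma inW_inv {r : ℕ} {w : Equiv.Perm (Fin (2 * r))} (hw : inW w) : inW w⁻¹ := by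
  intro l
  apply w.injective
  rw [hw (w⁻¹ l)]
  simp

end Parts

/-! ### Part (c): injectivity -/

lemma dc_inj {n r : ℕ} (hn : 1 ≤ n) {lam mu : Fin n → ℕ}
    (hlam : ∑ i, lam i = r) (hmu : ∑ i, mu i = r)
    {w w' : Equiv.Perm (Fin (2 * r))} (hw : inW w) (hw' : inW w')
    (heq : dcMatrix lam mu w = dcMatrix lam mu w') :
    ∃ x y : Equiv.Perm (Fin (2 * r)),
      inWpar lam x ∧ inWpar mu y ∧ w' = x * w * y := by
  classical
  set bl : Fin (2 * r) → Fin (2 * n) := blockOf hn lam hlam with hbl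
  set bm : Fin (2 * r) → Fin (2 * n) := blockOf hn mu hmu with hbm
  set f : Fin (2 * r) → Fin (2 * n) × Fin (2 * n) := fun l => (bm l, bl (w' l)) with hfdef
  set g : Fin (2 * r) → Fin (2 * n) × Fin (2 * n) := fun l => (bm l, bl (w l)) with hgdef
  set τ : Fin (2 * n) × Fin (2 * n) → Fin (2 * n) × Fin (2 * n) :=
    fun p => (p.1.rev, p.2.rev) with hτdef
  have hτ : ∀ t, τ (τ t) = t := by intro t; simp [hτdef]
  have hf : ∀ l, f l.rev = τ (f l) := by
    intro l
    simp only [hfdef, hτdef, hbl, hbm]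
    rw [blockOf_rev hn mu hmu, hw' l, blockOf_rev hn lam hlam]
  have hg : ∀ l, g l.rev = τ (g l) := by
    intro l
    simp only [hgdef, hτdef, hbl, hbm]
    rw [blockOf_rev hn mu hmu, hw l, blockOf_rev hn lam hlam]
  have hfilter : ∀ (u : Equiv.Perm (Fin (2 * r))) (i j : Fin (2 * n)),
      (Finset.univ.filter (fun l => (bm l, bl (u l)) = (j, i)))
        = Finset.univ.filter (fun l => inBlock mu j l ∧ inBlock lam i (u l)) := by
    intro u i j
    ext l
    simp only [Finset.mem_filter, Finset.mem_univ, true_and, Prod.mk.injEq, hbl, hbm,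
      blockOf_eq_iff]
  have hc : ∀ t, (Finset.univ.filter (fun l => f l = t)).card
      = (Finset.univ.filter (fun l => g l = t)).card := by
    rintro ⟨j, i⟩
    simp only [hfdef, hgdef]
    rw [hfilter w' i j, hfilter w i j]
    have h1 : dcMatrix lam mu w' i j = dcMatrix lam mu w i j := by rw [heq]
    simpa only [dcMatrix] using h1
  obtain ⟨y, hyW, hyspec⟩ := matching τ hτ f g hf hg hc
  have h1 : ∀ l, bm (y l) = bm l := by
    intro l
    have := hyspec l
    simp only [hfdef, hgdef, Prod.mk.injEq] at this
    exact this.1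
  have h2 : ∀ l, bl (w (y l)) = bl (w' l) := by
    intro l
    have := hyspec l
    simp only [hfdef, hgdef, Prod.mk.injEq] at this
    exact this.2
  refine ⟨w' * y⁻¹ * w⁻¹, y, ⟨?_, ?_⟩, ⟨hyW, ?_⟩, ?_⟩
  · exact inW_mul (inW_mul hw' (inW_inv hyW)) (inW_inv hw)
  · intro i l hl
    have hx : (w' * y⁻¹ * w⁻¹) l = w' (y⁻¹ (w⁻¹ l)) := by
      simp [Equiv.Perm.mul_apply]
    rw [hx]
    have h3 : bl (w' (y⁻¹ (w⁻¹ l))) = bl l := by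
      rw [← h2 (y⁻¹ (w⁻¹ l))]
      simp
    have h4 : bl l = i := by
      rw [hbl, blockOf_eq_iff hn lam hlam]; exact hl
    have h5 : bl (w' (y⁻¹ (w⁻¹ l))) = i := by rw [h3, h4]
    rw [hbl, blockOf_eq_iff hn lam hlam] at h5
    exact h5
  · intro j l hl
    have h4 : bm l = j := by
      rw [hbm, blockOf_eq_iff hn mu hmu]; exact hl
    have h5 : bm (y l) = j := by rw [h1, h4]
    rw [hbm, blockOf_eq_iff hn mu hmu] at h5
    exact h5
  · group

/-! ### Part (c): surjectivity -/

lemma dc_surj {n r : ℕ} (hn : 1 ≤ n) {lam mu : Fin n → ℕ}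
    (hlam : ∑ i, lam i = r) (hmu : ∑ i, mu i = r)
    (B : Fin (2 * n) → Fin (2 * n) → ℕ)
    (hsym : ∀ i j, B i j = B i.rev j.rev)
    (hrow : ∀ i, (∑ j, B i j) = hatVec lam i)
    (hcol : ∀ j, (∑ i, B i j) = hatVec mu j) :
    ∃ w : Equiv.Perm (Fin (2 * r)), inW w ∧ dcMatrix lam mu w = B := by
  classical
  have h2n : 0 < 2 * n := by omega
  set bm : Fin (2 * r) → Fin (2 * n) := blockOf hn mu hmu with hbm
  set c0 : Fin (2 * r) → Fin (2 * n) := fun l =>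
    vIdx h2n (fun i => B i (bm l)) ((l : ℕ) - psum mu (bm l)) with hc0
  set c : Fin (2 * r) → Fin (2 * n) := fun l =>
    if (l : ℕ) < r then c0 l else (c0 l.rev).rev with hc
  have hc0_iff : ∀ (j : Fin (2 * n)) (l : Fin (2 * r)), inBlock mu j l → ∀ i : Fin (2 * n),
      (c0 l = i ↔ psum mu j + fps (fun i' => B i' j) i ≤ (l : ℕ)
        ∧ (l : ℕ) < psum mu j + fps (fun i' => B i' j) i + B i j) := by
    intro j l hjl i
    have hbmj : bm l = j := by rw [hbm, blockOf_eq_iff hn mu hmu]; exact hjl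
    have hk : (l : ℕ) - psum mu j < ∑ i', B i' j := by
      rw [hcol j]
      have hA := hjl.1; have hB := hjl.2
      omega
    simp only [hc0]
    rw [hbmj, vIdx_eq_iff h2n hk]
    unfold vBlock
    beta_reduce
    have h1 := hjl.1
    omega
  have hceq : ∀ l : Fin (2 * r), c l.rev = (c l).rev := by
    intro l
    have hl2 := l.isLt
    have hrv : ((l.rev : Fin (2 * r)) : ℕ) = 2 * r - 1 - (l : ℕ) := by
      rw [Fin.val_rev]; omega
    by_cases h : (l : ℕ) < r
    · have h' : ¬ ((l.rev : ℕ) < r) := by omega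
      simp only [hc]
      rw [if_neg h', if_pos h, Fin.rev_rev]
    · have h' : (l.rev : ℕ) < r := by omega
      simp only [hc]
      rw [if_pos h', if_neg h, Fin.rev_rev]
  have hNhalf : ∀ (i j : Fin (2 * n)), (j : ℕ) < n →
      (Finset.univ.filter (fun l : Fin (2 * r) => inBlock mu j l ∧ c l = i)).card = B i j := by
    intro i j hj
    have hfb : fps (fun i' => B i' j) i + B i j ≤ hatVec mu j := by
      have h := fps_add_le_total (v := fun i' => B i' j) i
      rw [hcol j] at h
      exact h
    have hhalf := psum_half_le hmu hj
    have h2r := psum_add_hatVec_le hmu j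
    have hint : (Finset.univ.filter (fun l : Fin (2 * r) => inBlock mu j l ∧ c l = i))
        = Finset.univ.filter (fun l : Fin (2 * r) =>
            psum mu j + fps (fun i' => B i' j) i ≤ (l : ℕ)
            ∧ (l : ℕ) < psum mu j + fps (fun i' => B i' j) i + B i j) := by
      ext l
      simp only [Finset.mem_filter, Finset.mem_univ, true_and]
      constructor
      · rintro ⟨h1, h2⟩
        have hlr : (l : ℕ) < r := inBlock_lt_half hmu h1 hj
        have hcc : c l = c0 l := by simp only [hc]; rw [if_pos hlr]
        rw [hcc] at h2
        exact (hc0_iff j l h1 i).mp h2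
      · intro h
        have h1 : inBlock mu j l := by
          constructor
          · omega
          · omega
        have hlr : (l : ℕ) < r := inBlock_lt_half hmu h1 hj
        have hcc : c l = c0 l := by simp only [hc]; rw [if_pos hlr]
        refine ⟨h1, ?_⟩
        rw [hcc]
        exact (hc0_iff j l h1 i).mpr h
    rw [hint, card_filter_interval (by omega)]
    omega
  have hN : ∀ (i j : Fin (2 * n)),
      (Finset.univ.filter (fun l : Fin (2 * r) => inBlock mu j l ∧ c l = i)).card = B i j := by
    intro i j
    by_cases hj : (j : ℕ) < n
    · exact hNhalf i j hj
    · have hjrev : ((j.rev : Fin (2 * n)) : ℕ) < n := by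
        rw [Fin.val_rev]; have := j.isLt; omega
      have hcard : (Finset.univ.filter (fun l : Fin (2 * r) => inBlock mu j l ∧ c l = i)).card
          = (Finset.univ.filter
              (fun l : Fin (2 * r) => inBlock mu j.rev l ∧ c l = i.rev)).card := by
        refine Finset.card_nbij' (fun l => l.rev) (fun l => l.rev) ?_ ?_ (by intro l _; simp) (by intro l _; simp)
        · intro l hl
          simp only [Finset.mem_coe, Finset.mem_filter, Finset.mem_univ, true_and] at hl ⊢
          obtain ⟨h1, h2⟩ := hl
          exact ⟨(inBlock_rev hmu j l).mp h1, by rw [hceq l, h2]⟩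
        · intro l hl
          simp only [Finset.mem_coe, Finset.mem_filter, Finset.mem_univ, true_and] at hl ⊢
          obtain ⟨h1, h2⟩ := hl
          constructor
          · have := (inBlock_rev hmu j.rev l).mp h1
            rwa [Fin.rev_rev] at this
          · rw [hceq l, h2, Fin.rev_rev]
      rw [hcard, hNhalf i.rev j.rev hjrev]
      exact (hsym i j).symm
  have hcfib : ∀ i : Fin (2 * n),
      (Finset.univ.filter (fun l : Fin (2 * r) => c l = i)).card = hatVec lam i := by
    intro i
    have hfib := Finset.card_eq_sum_card_fiberwise
      (f := bm) (s := Finset.univ.filter (fun l : Fin (2 * r) => c l = i))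
      (t := Finset.univ) (fun x _ => Finset.mem_univ _)
    have heach : ∀ j : Fin (2 * n),
        ((Finset.univ.filter (fun l : Fin (2 * r) => c l = i)).filter (fun l => bm l = j))
        = Finset.univ.filter (fun l : Fin (2 * r) => inBlock mu j l ∧ c l = i) := by
      intro j
      ext l
      simp only [Finset.mem_filter, Finset.mem_univ, true_and, hbm,
        blockOf_eq_iff hn mu hmu]
      tauto
    rw [hfib]
    calc ∑ j, ((Finset.univ.filter (fun l : Fin (2 * r) => c l = i)).filter
          (fun l => bm l = j)).card
        = ∑ j, B i j := Finset.sum_congr rfl (fun j _ => by rw [heach j, hN i j])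
      _ = hatVec lam i := hrow i
  set bl : Fin (2 * r) → Fin (2 * n) := blockOf hn lam hlam with hbldef
  have hgfib : ∀ i : Fin (2 * n),
      (Finset.univ.filter (fun l : Fin (2 * r) => bl l = i)).card = hatVec lam i := by
    intro i
    have heq2 : (Finset.univ.filter (fun l : Fin (2 * r) => bl l = i))
        = Finset.univ.filter (fun l : Fin (2 * r) => inBlock lam i l) := by
      ext l
      simp only [Finset.mem_filter, Finset.mem_univ, true_and, hbldef,
        blockOf_eq_iff hn lam hlam]
    rw [heq2, card_inBlock hlam]
  have hblrev : ∀ l : Fin (2 * r), bl l.rev = (bl l).rev := by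
    intro l
    simp only [hbldef]
    exact blockOf_rev hn lam hlam l
  obtain ⟨w, hwW, hwspec⟩ := matching (T := Fin (2 * n)) Fin.rev (fun t => Fin.rev_rev t)
    c bl hceq hblrev (fun t => by rw [hcfib t, hgfib t])
  refine ⟨w, hwW, ?_⟩
  funext i j
  have hmat : dcMatrix lam mu w i j
      = (Finset.univ.filter (fun l : Fin (2 * r) => inBlock mu j l ∧ c l = i)).card := by
    simp only [dcMatrix]
    congr 1
    ext l
    simp only [Finset.mem_filter, Finset.mem_univ, true_and]
    have hiff : inBlock lam i (w l) ↔ c l = i := by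
      rw [← blockOf_eq_iff hn lam hlam (l := w l) (i := i)]
      rw [show blockOf hn lam hlam (w l) = bl (w l) from rfl, hwspec l]
    rw [hiff]
  rw [hmat, hN i j]

end DC

/-- For `λ, μ ∈ Λ(n,r)`: (a) for `w ∈ W` the matrix `A(w)` lies in `Ξ_{2n,2r}` with
`ro(A(w)) = λ̂` and `co(A(w)) = μ̂`; (b) `A(w)` depends only on the double coset
`W_λ w W_μ`; and (c) the induced map from double cosets `W_λ\W/W_μ` to
`{A ∈ Ξ_{2n,2r} : ro(A) = λ̂, co(A) = μ̂}` is a bijection. -/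
theorem doubleCoset_matrix_bijection (n r : ℕ) (hn : 1 ≤ n) (hr : 1 ≤ r)
    (lam mu : Fin n → ℕ) (hlam : ∑ i, lam i = r) (hmu : ∑ i, mu i = r) :
    -- (a)
    ((∀ w : Equiv.Perm (Fin (2 * r)), inW w →
      (∀ i j, dcMatrix lam mu w i j = dcMatrix lam mu w i.rev j.rev) ∧
      (∑ i, ∑ j, dcMatrix lam mu w i j) = 2 * r ∧
      (∀ i, (∑ j, dcMatrix lam mu w i j) = hatVec lam i) ∧
      (∀ j, (∑ i, dcMatrix lam mu w i j) = hatVec mu j))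
    -- (b)
    ∧ (∀ w x y : Equiv.Perm (Fin (2 * r)), inW w → inWpar lam x → inWpar mu y →
        dcMatrix lam mu (x * w * y) = dcMatrix lam mu w)
    -- (c): surjectivity
    ∧ (∀ B : Fin (2 * n) → Fin (2 * n) → ℕ,
        (∀ i j, B i j = B i.rev j.rev) →
        (∀ i, (∑ j, B i j) = hatVec lam i) →
        (∀ j, (∑ i, B i j) = hatVec mu j) →
        ∃ w : Equiv.Perm (Fin (2 * r)), inW w ∧ dcMatrix lam mu w = B)
    -- (c): injectivity modulo double cosets
    ∧ (∀ w w' : Equiv.Perm (Fin (2 * r)), inW w → inW w' →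
        dcMatrix lam mu w = dcMatrix lam mu w' →
        ∃ x y : Equiv.Perm (Fin (2 * r)),
          inWpar lam x ∧ inWpar mu y ∧ w' = x * w * y)) := by
  refine ⟨?_, ?_, ?_, ?_⟩
  · intro w hw
    refine ⟨DC.dc_symm hmu hlam hw, ?_, DC.dc_row_sum hn hmu hlam w, DC.dc_col_sum hn hmu hlam w⟩
    have h1 : ∀ i : Fin (2 * n), ∑ j, dcMatrix lam mu w i j = hatVec lam i :=
      DC.dc_row_sum hn hmu hlam w
    calc ∑ i, ∑ j, dcMatrix lam mu w i j = ∑ i, hatVec lam i :=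
          Finset.sum_congr rfl (fun i _ => h1 i)
      _ = 2 * ∑ i, lam i := DC.sum_hatVec lam
      _ = 2 * r := by rw [hlam]
  · intro w x y _ hx hy
    exact DC.dc_coset hn hmu hlam w x y hx hy
  · intro B hsym hrow hcol
    exact DC.dc_surj hn hlam hmu B hsym hrow hcol
  · intro w w' hw hw' heq
    exact DC.dc_inj hn hlam hmu hw hw' heq
end

section
/- Let n ≥ r ≥ 1, let i = (i_1,…,i_r) ∈ I(2n,r), and let l ∈ [1,r] with i_l = n. Then β'_l(A_i, n) = #{k ∈ [1, l−1] : i_k = n+1} − #{k ∈ [1, l−1] : i_k = n}, as integers. -/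
open Finset

/-- The matrix `A_i` associated with a tuple `i = (i_1, …, i_r) ∈ I(2n,r)` (here
`1`-based indexing): `a_{k,l} = δ_{k, i_l}` for `l ∈ [1,r]`, `a_{k,l} = 0` for
`l ∈ [r+1, 2n-r]`, and `a_{k,l} = δ_{2n+1-k, i_{2n+1-l}}` for `l ∈ [2n+1-r, 2n]`. -/
def tupleMat (n r : ℕ) (ii : ℕ → ℕ) : ℕ → ℕ → ℕ := fun k l =>
  if 1 ≤ l ∧ l ≤ r then (if k = ii l then 1 else 0)
  else if 2 * n + 1 - r ≤ l ∧ l ≤ 2 * n then (if 2 * n + 1 - k = ii (2 * n + 1 - l) then 1 else 0)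
  else 0

/-- For `n ≥ r ≥ 1`, `i ∈ I(2n,r)` and `l ∈ [1,r]` with `i_l = n`, one has
`β'_l(A_i, n) = #{k ∈ [1,l-1] : i_k = n+1} - #{k ∈ [1,l-1] : i_k = n}`,
where `β'_p(A, h) = ∑_{j ≤ p} a_{h+1,j} - ∑_{j < p} a_{h,j}`. -/
theorem tupleMat_betaPrime_at_n (n r : ℕ) (hr : 1 ≤ r) (hrn : r ≤ n)
    (ii : ℕ → ℕ) (hii : ∀ k, 1 ≤ k → k ≤ r → 1 ≤ ii k ∧ ii k ≤ 2 * n)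
    (l : ℕ) (hl1 : 1 ≤ l) (hl2 : l ≤ r) (hil : ii l = n) :
    ((∑ j ∈ Icc 1 l, (tupleMat n r ii (n + 1) j : ℤ))
        - ∑ j ∈ Icc 1 (l - 1), (tupleMat n r ii n j : ℤ))
      = (((Icc 1 (l - 1)).filter (fun k => ii k = n + 1)).card : ℤ)
        - (((Icc 1 (l - 1)).filter (fun k => ii k = n)).card : ℤ) := by
  have h1 : ∑ j ∈ Icc 1 l, (tupleMat n r ii (n + 1) j : ℤ)
      = ∑ j ∈ Icc 1 l, (if ii j = n + 1 then (1 : ℤ) else 0) := by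
    apply Finset.sum_congr rfl
    intro j hj
    simp only [mem_Icc] at hj
    simp only [tupleMat, hj.1, hj.2.trans hl2, and_self, if_true]
    by_cases h : ii j = n + 1 <;> simp [h, eq_comm]
  have h2 : ∑ j ∈ Icc 1 (l - 1), (tupleMat n r ii n j : ℤ)
      = ∑ j ∈ Icc 1 (l - 1), (if ii j = n then (1 : ℤ) else 0) := by
    apply Finset.sum_congr rfl
    intro j hj
    simp only [mem_Icc] at hj
    have : j ≤ r := le_trans (hj.2.trans (Nat.sub_le l 1)) hl2
    simp only [tupleMat, hj.1, this, and_self, if_true]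
    rcases eq_or_ne (ii j) n with h | h
    · simp [h]
    · simp [h]; omega
  have h3 : ∑ j ∈ Icc 1 l, (if ii j = n + 1 then (1 : ℤ) else 0)
      = ∑ j ∈ Icc 1 (l - 1), (if ii j = n + 1 then (1 : ℤ) else 0) := by
    have hsplit : Icc 1 l = insert l (Icc 1 (l - 1)) := by
      ext x
      simp only [mem_insert, mem_Icc]
      omega
    rw [hsplit, Finset.sum_insert (by simp [mem_Icc]; omega)]
    have : ii l ≠ n + 1 := by omega
    simp [this]
  rw [h1, h2, h3, Finset.sum_boole, Finset.sum_boole]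
end

section
/- Let n ≥ r ≥ 1, let i = (i_1,…,i_r) ∈ I(2n,r), and let l ∈ [1,r] with i_l = n+1. Then β'_{2n+1−l}(A_i, n) = #{k ∈ [1, l−1] : i_k = n+1} − #{k ∈ [1, l−1] : i_k = n} + 1, as integers. -/
open Finset

lemma tupleMat_rowsum (n r : ℕ) (hrn : r ≤ n) (ii : ℕ → ℕ) (k p : ℕ)
    (hp1 : 2 * n - r ≤ p) (hp2 : p ≤ 2 * n) :
    ∑ j ∈ Icc 1 p, tupleMat n r ii k j
      = (∑ j ∈ Icc 1 r, if k = ii j then 1 else 0)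
        + ∑ m ∈ Icc (2 * n + 1 - p) r, if 2 * n + 1 - k = ii m then 1 else 0 := by
  have hIcc : ∀ q : ℕ, Icc 1 q = Ioc 0 q := fun q => by rw [← Finset.Icc_add_one_left_eq_Ioc]; rfl
  have hrp : r ≤ p := by omega
  rw [hIcc, ← Finset.sum_Ioc_consecutive _ (Nat.zero_le r) hrp,
    ← Finset.sum_Ioc_consecutive _ (show r ≤ 2 * n - r by omega) (show 2 * n - r ≤ p by omega)]
  have h1 : ∑ j ∈ Ioc 0 r, tupleMat n r ii k j
      = ∑ j ∈ Icc 1 r, if k = ii j then 1 else 0 := by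
    rw [hIcc]
    refine Finset.sum_congr rfl fun j hj => ?_
    simp only [Finset.mem_Ioc] at hj
    have hj1 : 1 ≤ j ∧ j ≤ r := ⟨hj.1, hj.2⟩
    simp only [tupleMat]
    rw [if_pos hj1]
  have h2 : ∑ j ∈ Ioc r (2 * n - r), tupleMat n r ii k j = 0 := by
    refine Finset.sum_eq_zero fun j hj => ?_
    simp only [Finset.mem_Ioc] at hj
    have h1 : ¬ (1 ≤ j ∧ j ≤ r) := by omega
    have h2 : ¬ (2 * n + 1 - r ≤ j ∧ j ≤ 2 * n) := by omega
    simp only [tupleMat]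
    rw [if_neg h1, if_neg h2]
  have h3 : ∑ j ∈ Ioc (2 * n - r) p, tupleMat n r ii k j
      = ∑ m ∈ Icc (2 * n + 1 - p) r, if 2 * n + 1 - k = ii m then 1 else 0 := by
    refine Finset.sum_nbij' (fun j => 2 * n + 1 - j) (fun m => 2 * n + 1 - m) ?_ ?_ ?_ ?_ ?_
    · intro a ha; simp only [Finset.mem_Ioc] at ha; simp only [Finset.mem_Icc]; omega
    · intro a ha; simp only [Finset.mem_Icc] at ha; simp only [Finset.mem_Ioc]; omega
    · intro a ha; simp only [Finset.mem_Ioc] at ha; omega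
    · intro a ha; simp only [Finset.mem_Icc] at ha; omega
    · intro a ha
      simp only [Finset.mem_Ioc] at ha
      have h1 : ¬ (1 ≤ a ∧ a ≤ r) := by omega
      have h2 : (2 * n + 1 - r ≤ a ∧ a ≤ 2 * n) := by omega
      simp only [tupleMat]
      rw [if_neg h1, if_pos h2]
  rw [h1, h2, h3]; ring

/-- For `n ≥ r ≥ 1`, `i ∈ I(2n,r)` and `l ∈ [1,r]` with `i_l = n+1`, one has
`β'_{2n+1-l}(A_i, n) = #{k ∈ [1,l-1] : i_k = n+1} - #{k ∈ [1,l-1] : i_k = n} + 1`,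
where `β'_p(A, h) = ∑_{j ≤ p} a_{h+1,j} - ∑_{j < p} a_{h,j}`. -/
theorem tupleMat_betaPrime_at_np1 (n r : ℕ) (hr : 1 ≤ r) (hrn : r ≤ n)
    (ii : ℕ → ℕ) (hii : ∀ k, 1 ≤ k → k ≤ r → 1 ≤ ii k ∧ ii k ≤ 2 * n)
    (l : ℕ) (hl1 : 1 ≤ l) (hl2 : l ≤ r) (hil : ii l = n + 1) :
    ((∑ j ∈ Icc 1 (2 * n + 1 - l), (tupleMat n r ii (n + 1) j : ℤ))
        - ∑ j ∈ Icc 1 (2 * n + 1 - l - 1), (tupleMat n r ii n j : ℤ))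
      = (((Icc 1 (l - 1)).filter (fun k => ii k = n + 1)).card : ℤ)
        - (((Icc 1 (l - 1)).filter (fun k => ii k = n)).card : ℤ) + 1 := by
  rw [← Nat.cast_sum, ← Nat.cast_sum,
    tupleMat_rowsum n r hrn ii (n + 1) (2 * n + 1 - l) (by omega) (by omega),
    tupleMat_rowsum n r hrn ii n (2 * n + 1 - l - 1) (by omega) (by omega)]
  have e1 : 2 * n + 1 - (2 * n + 1 - l) = l := by omega
  have e2 : 2 * n + 1 - (2 * n + 1 - l - 1) = l + 1 := by omega
  have e3 : 2 * n + 1 - (n + 1) = n := by omega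
  have e4 : 2 * n + 1 - n = n + 1 := by omega
  rw [e1, e2, e3, e4]
  -- split Icc 1 r at l-1 and l
  have hsplit : ∀ c : ℕ,
      (∑ j ∈ Icc 1 r, if c = ii j then 1 else 0)
        = (∑ j ∈ Icc 1 (l - 1), if c = ii j then 1 else 0)
          + ((if c = ii l then 1 else 0)
          + ∑ j ∈ Icc (l + 1) r, if c = ii j then 1 else 0) := by
    intro c
    have hIcc : ∀ a q : ℕ, Icc (a + 1) q = Ioc a q := fun a q => by rw [← Finset.Icc_add_one_left_eq_Ioc]
    have h1 : Icc 1 (l - 1) = Ioc 0 (l - 1) := hIcc 0 (l - 1)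
    have h2 : Icc (l + 1) r = Ioc l r := hIcc l r
    have h0 : Icc 1 r = Ioc 0 r := hIcc 0 r
    rw [h0, h1, h2,
      ← Finset.sum_Ioc_consecutive _ (show 0 ≤ l - 1 by omega) (show l - 1 ≤ r by omega),
      ← Finset.sum_Ioc_consecutive _ (show l - 1 ≤ l by omega) (show l ≤ r by omega)]
    congr 1
    congr 1
    have : Ioc (l - 1) l = {l} := by
      ext x; simp only [Finset.mem_Ioc, Finset.mem_singleton]; omega
    rw [this, Finset.sum_singleton]
  have hsplit2 : ∀ c : ℕ,
      (∑ j ∈ Icc l r, if c = ii j then 1 else 0)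
        = (if c = ii l then 1 else 0) + ∑ j ∈ Icc (l + 1) r, if c = ii j then 1 else 0 := by
    intro c
    have h2 : Icc (l + 1) r = Ioc l r := by rw [← Finset.Icc_add_one_left_eq_Ioc]
    have h3 : Icc l r = Ioc (l - 1) r := by
      ext x; simp only [Finset.mem_Icc, Finset.mem_Ioc]; omega
    rw [h2, h3, ← Finset.sum_Ioc_consecutive _ (show l - 1 ≤ l by omega) (show l ≤ r by omega)]
    congr 1
    have : Ioc (l - 1) l = {l} := by
      ext x; simp only [Finset.mem_Ioc, Finset.mem_singleton]; omega
    rw [this, Finset.sum_singleton]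
  rw [hsplit (n + 1), hsplit n, hsplit2 n]
  have hv1 : (if n + 1 = ii l then 1 else 0) = 1 := by simp [hil]
  have hv2 : (if n = ii l then 1 else 0) = 0 := by simp [hil]
  rw [hv1, hv2]
  have hc1 : ((Icc 1 (l - 1)).filter (fun k => ii k = n + 1)).card
      = ∑ j ∈ Icc 1 (l - 1), if n + 1 = ii j then 1 else 0 := by
    rw [Finset.card_filter]
    exact Finset.sum_congr rfl fun j _ => by simp [eq_comm]
  have hc2 : ((Icc 1 (l - 1)).filter (fun k => ii k = n)).card
      = ∑ j ∈ Icc 1 (l - 1), if n = ii j then 1 else 0 := by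
    rw [Finset.card_filter]
    exact Finset.sum_congr rfl fun j _ => by simp [eq_comm]
  rw [hc1, hc2]
  push_cast
  ring
end

section
/- Let n ≥ 2, h ∈ [1, n−1], m ≥ 1, and A = (a_{i,j}) ∈ Ξ_{2n}. Let ν, ν' ∈ Λ(2n,m) satisfy ν_j ≤ a_{h+1,j} and ν'_j ≤ a_{h+1,j} for all j ∈ [1,2n]. If ν' ⊴ ν (dominance order), then A + ∑_{j=1}^{2n} ν_j (E^θ_{h,j} − E^θ_{h+1,j}) ⪯ A + ∑_{j=1}^{2n} ν'_j (E^θ_{h,j} − E^θ_{h+1,j}), and both of these matrices lie in Ξ_{2n}. -/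
open Finset

/-- Entry of the matrix `E^θ_{i,j} = E_{i,j} + E_{2n+1-i,2n+1-j}` (size `2n`,
`1`-based indexing), as an integer. -/
def EthZ (n i j : ℕ) : ℕ → ℕ → ℤ := fun k l =>
  (if k = i ∧ l = j then 1 else 0) + (if k = 2 * n + 1 - i ∧ l = 2 * n + 1 - j then 1 else 0)

/-- Entry of the matrix `A + ∑_{j=1}^{2n} ν_j (E^θ_{h,j} - E^θ_{h+1,j})`. -/
def shiftUpMat (n h : ℕ) (A : ℕ → ℕ → ℕ) (ν : ℕ → ℕ) : ℕ → ℕ → ℤ := fun k l =>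
  (A k l : ℤ) + ∑ j ∈ Icc 1 (2 * n), (ν j : ℤ) * (EthZ n h j k l - EthZ n (h + 1) j k l)

private lemma sumA (n i l : ℕ) (ν : ℕ → ℕ) (k : ℕ) (hl1 : 1 ≤ l) (hl2 : l ≤ 2*n) :
    ∑ j ∈ Icc 1 (2*n), (ν j : ℤ) * (if k = i ∧ l = j then 1 else 0)
      = if k = i then (ν l : ℤ) else 0 := by
  have h1 : ∀ j ∈ Icc 1 (2*n), (ν j : ℤ) * (if k = i ∧ l = j then 1 else 0)
      = if j = l then (if k = i then (ν j : ℤ) else 0) else 0 := by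
    intro j hj
    simp only [show (l = j) ↔ (j = l) from eq_comm]
    by_cases hk : k = i <;> by_cases hjl : j = l <;> simp [hk, hjl]
  rw [Finset.sum_congr rfl h1, Finset.sum_ite_eq' (Icc 1 (2*n)) l
      (fun j => if k = i then (ν j : ℤ) else 0), if_pos (by simp [mem_Icc]; omega)]

private lemma sumB (n i l : ℕ) (ν : ℕ → ℕ) (k : ℕ) (hl1 : 1 ≤ l) (hl2 : l ≤ 2*n) :
    ∑ j ∈ Icc 1 (2*n), (ν j : ℤ) * (if k = 2*n+1-i ∧ l = 2*n+1-j then 1 else 0)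
      = if k = 2*n+1-i then (ν (2*n+1-l) : ℤ) else 0 := by
  have h1 : ∀ j ∈ Icc 1 (2*n), (ν j : ℤ) * (if k = 2*n+1-i ∧ l = 2*n+1-j then 1 else 0)
      = if j = 2*n+1-l then (if k = 2*n+1-i then (ν j : ℤ) else 0) else 0 := by
    intro j hj
    simp only [mem_Icc] at hj
    have hiff : (l = 2*n+1-j) ↔ (j = 2*n+1-l) := by omega
    simp only [hiff]
    by_cases hk : k = 2*n+1-i <;> by_cases hjl : j = 2*n+1-l <;> simp [hk, hjl]
  rw [Finset.sum_congr rfl h1, Finset.sum_ite_eq' (Icc 1 (2*n)) (2*n+1-l)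
      (fun j => if k = 2*n+1-i then (ν j : ℤ) else 0), if_pos (by simp [mem_Icc]; omega)]

private lemma entryEq (n h : ℕ) (A : ℕ → ℕ → ℕ) (ν : ℕ → ℕ) (k l : ℕ)
    (hl1 : 1 ≤ l) (hl2 : l ≤ 2*n) :
    shiftUpMat n h A ν k l = (A k l : ℤ)
      + ((if k = h then (ν l : ℤ) else 0) - (if k = h+1 then (ν l : ℤ) else 0))
      + ((if k = 2*n+1-h then (ν (2*n+1-l) : ℤ) else 0)
        - (if k = 2*n-h then (ν (2*n+1-l) : ℤ) else 0)) := by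
  unfold shiftUpMat EthZ
  have expand : ∀ j ∈ Icc 1 (2*n), (ν j:ℤ) *
      (((if k = h ∧ l = j then (1:ℤ) else 0) + (if k = 2*n+1-h ∧ l = 2*n+1-j then 1 else 0))
        - ((if k = h+1 ∧ l = j then 1 else 0) + (if k = 2*n+1-(h+1) ∧ l = 2*n+1-j then 1 else 0)))
      = ((ν j:ℤ)*(if k = h ∧ l = j then 1 else 0)
          + (ν j:ℤ)*(if k = 2*n+1-h ∧ l = 2*n+1-j then 1 else 0))
        - ((ν j:ℤ)*(if k = h+1 ∧ l = j then 1 else 0)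
          + (ν j:ℤ)*(if k = 2*n+1-(h+1) ∧ l = 2*n+1-j then 1 else 0)) := fun j _ => by ring
  rw [Finset.sum_congr rfl expand, Finset.sum_sub_distrib, Finset.sum_add_distrib,
    Finset.sum_add_distrib, sumA n h l ν k hl1 hl2, sumB n h l ν k hl1 hl2,
    sumA n (h+1) l ν k hl1 hl2, sumB n (h+1) l ν k hl1 hl2,
    show 2*n+1-(h+1) = 2*n-h from by omega]
  ring

private lemma Rsum (n v : ℕ) (ν : ℕ → ℕ) (hv1 : 1 ≤ v) (hv2 : v ≤ 2*n) :
    ∑ j ∈ Icc v (2*n), ν (2*n+1-j) = ∑ j ∈ Icc 1 (2*n+1-v), ν j := by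
  apply Finset.sum_nbij' (fun j => 2*n+1-j) (fun j => 2*n+1-j) <;>
    (intro a ha; simp_all [mem_Icc]) <;> omega

private lemma Tsplit (n v : ℕ) (ν : ℕ → ℕ) (hv1 : 1 ≤ v) (hv2 : v ≤ 2*n) :
    ∑ j ∈ Icc 1 (v-1), ν j + ∑ j ∈ Icc v (2*n), ν j = ∑ j ∈ Icc 1 (2*n), ν j := by
  have h1 : Icc 1 (v-1) = Ioc 0 (v-1) := by rw [← Finset.Icc_add_one_left_eq_Ioc]; rfl
  have h2 : Icc v (2*n) = Ioc (v-1) (2*n) := by rw [← Finset.Icc_add_one_left_eq_Ioc]; congr 1; omega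
  have h3 : Icc 1 (2*n) = Ioc 0 (2*n) := by rw [← Finset.Icc_add_one_left_eq_Ioc]; rfl
  rw [h1, h2, h3, Finset.sum_Ioc_consecutive _ (by omega) (by omega)]

/-- Let `h ∈ [1, n-1]`, `A ∈ Ξ_{2n}` and `ν, ν' ∈ Λ(2n,m)` with `ν_j, ν'_j ≤ a_{h+1,j}`.
If `ν' ⊴ ν` then `A + ∑_j ν_j (E^θ_{h,j} - E^θ_{h+1,j}) ⪯ A + ∑_j ν'_j (E^θ_{h,j} - E^θ_{h+1,j})`,
and both matrices lie in `Ξ_{2n}` (nonnegative, point-symmetric entries). -/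
theorem shiftUp_prec_of_dominance (n : ℕ) (hn : 2 ≤ n) (h : ℕ) (hh1 : 1 ≤ h)
    (hh2 : h ≤ n - 1) (m : ℕ) (hm : 1 ≤ m) (A : ℕ → ℕ → ℕ)
    (hA : ∀ i j, 1 ≤ i → i ≤ 2 * n → 1 ≤ j → j ≤ 2 * n →
      A i j = A (2 * n + 1 - i) (2 * n + 1 - j))
    (ν ν' : ℕ → ℕ)
    (hνsum : ∑ j ∈ Icc 1 (2 * n), ν j = m) (hν'sum : ∑ j ∈ Icc 1 (2 * n), ν' j = m)
    (hνle : ∀ j, 1 ≤ j → j ≤ 2 * n → ν j ≤ A (h + 1) j)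
    (hν'le : ∀ j, 1 ≤ j → j ≤ 2 * n → ν' j ≤ A (h + 1) j)
    (hdom : ∀ t, 1 ≤ t → t ≤ 2 * n → (∑ j ∈ Icc 1 t, ν' j) ≤ ∑ j ∈ Icc 1 t, ν j) :
    -- the first matrix lies in Ξ_{2n}
    ((∀ k l, 1 ≤ k → k ≤ 2 * n → 1 ≤ l → l ≤ 2 * n →
        0 ≤ shiftUpMat n h A ν k l ∧
        shiftUpMat n h A ν k l = shiftUpMat n h A ν (2 * n + 1 - k) (2 * n + 1 - l))
    -- the second matrix lies in Ξ_{2n}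
    ∧ (∀ k l, 1 ≤ k → k ≤ 2 * n → 1 ≤ l → l ≤ 2 * n →
        0 ≤ shiftUpMat n h A ν' k l ∧
        shiftUpMat n h A ν' k l = shiftUpMat n h A ν' (2 * n + 1 - k) (2 * n + 1 - l))
    -- the preorder relation
    ∧ (∀ u v, 1 ≤ u → u < v → v ≤ 2 * n →
        (∑ i ∈ Icc 1 u, ∑ j ∈ Icc v (2 * n), shiftUpMat n h A ν i j)
          ≤ ∑ i ∈ Icc 1 u, ∑ j ∈ Icc v (2 * n), shiftUpMat n h A ν' i j)) := by
  have nonneg : ∀ (μ : ℕ → ℕ), (∀ j, 1 ≤ j → j ≤ 2*n → μ j ≤ A (h+1) j) →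
      ∀ k l, 1 ≤ k → k ≤ 2*n → 1 ≤ l → l ≤ 2*n → 0 ≤ shiftUpMat n h A μ k l := by
    intro μ hle k l hk1 hk2 hl1 hl2
    rw [entryEq n h A μ k l hl1 hl2]
    by_cases e1 : k = h
    · rw [if_pos e1, if_neg (by omega), if_neg (by omega), if_neg (by omega)]
      have g1 : (0:ℤ) ≤ (A k l : ℤ) := Int.natCast_nonneg _
      have g2 : (0:ℤ) ≤ (μ l : ℤ) := Int.natCast_nonneg _
      linarith
    · by_cases e2 : k = h+1
      · rw [if_neg e1, if_pos e2, if_neg (by omega), if_neg (by omega)]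
        have hc : (μ l : ℤ) ≤ (A (h+1) l : ℤ) := by exact_mod_cast hle l hl1 hl2
        rw [e2]; linarith
      · by_cases e3 : k = 2*n+1-h
        · rw [if_neg e1, if_neg e2, if_pos e3, if_neg (by omega)]
          have g1 : (0:ℤ) ≤ (A k l : ℤ) := Int.natCast_nonneg _
          have g2 : (0:ℤ) ≤ (μ (2*n+1-l) : ℤ) := Int.natCast_nonneg _
          linarith
        · by_cases e4 : k = 2*n-h
          · rw [if_neg e1, if_neg e2, if_neg e3, if_pos e4]
            have hAeq : A (2*n-h) l = A (h+1) (2*n+1-l) := by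
              have := hA (2*n-h) l (by omega) (by omega) hl1 hl2
              rwa [show 2*n+1-(2*n-h) = h+1 from by omega] at this
            have hc : (μ (2*n+1-l) : ℤ) ≤ (A (h+1) (2*n+1-l) : ℤ) := by
              exact_mod_cast hle (2*n+1-l) (by omega) (by omega)
            rw [e4, hAeq]; linarith
          · rw [if_neg e1, if_neg e2, if_neg e3, if_neg e4]
            have g1 : (0:ℤ) ≤ (A k l : ℤ) := Int.natCast_nonneg _
            linarith
  have symm : ∀ (μ : ℕ → ℕ) k l, 1 ≤ k → k ≤ 2*n → 1 ≤ l → l ≤ 2*n →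
      shiftUpMat n h A μ k l = shiftUpMat n h A μ (2*n+1-k) (2*n+1-l) := by
    intro μ k l hk1 hk2 hl1 hl2
    rw [entryEq n h A μ k l hl1 hl2,
      entryEq n h A μ (2*n+1-k) (2*n+1-l) (by omega) (by omega),
      show 2*n+1-(2*n+1-l) = l from by omega, hA k l hk1 hk2 hl1 hl2]
    have c1 : (2*n+1-k = h) ↔ (k = 2*n+1-h) := by omega
    have c2 : (2*n+1-k = h+1) ↔ (k = 2*n-h) := by omega
    have c3 : (2*n+1-k = 2*n+1-h) ↔ (k = h) := by omega
    have c4 : (2*n+1-k = 2*n-h) ↔ (k = h+1) := by omega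
    simp only [c1, c2, c3, c4]
    ring
  refine ⟨fun k l hk1 hk2 hl1 hl2 => ⟨nonneg ν hνle k l hk1 hk2 hl1 hl2,
      symm ν k l hk1 hk2 hl1 hl2⟩,
    fun k l hk1 hk2 hl1 hl2 => ⟨nonneg ν' hν'le k l hk1 hk2 hl1 hl2,
      symm ν' k l hk1 hk2 hl1 hl2⟩, ?_⟩
  intro u v hu1 huv hv2
  have hv1 : 1 ≤ v := by omega
  have inner : ∀ (μ : ℕ → ℕ) i,
      ∑ j ∈ Icc v (2*n), shiftUpMat n h A μ i j
        = (∑ j ∈ Icc v (2*n), (A i j : ℤ))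
          + ((if i = h then (∑ j ∈ Icc v (2*n), (μ j : ℤ)) else 0)
            - (if i = h+1 then (∑ j ∈ Icc v (2*n), (μ j : ℤ)) else 0))
          + ((if i = 2*n+1-h then (∑ j ∈ Icc v (2*n), (μ (2*n+1-j) : ℤ)) else 0)
            - (if i = 2*n-h then (∑ j ∈ Icc v (2*n), (μ (2*n+1-j) : ℤ)) else 0)) := by
    intro μ i
    rw [Finset.sum_congr rfl (fun j hj => entryEq n h A μ i j
      (by simp only [mem_Icc] at hj; omega) (by simp only [mem_Icc] at hj; omega))]
    simp only [Finset.sum_add_distrib, Finset.sum_sub_distrib, Finset.sum_ite_irrel,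
      Finset.sum_const_zero]
  have hS : ∀ (μ : ℕ → ℕ),
      ∑ i ∈ Icc 1 u, ∑ j ∈ Icc v (2*n), shiftUpMat n h A μ i j
        = (∑ i ∈ Icc 1 u, ∑ j ∈ Icc v (2*n), (A i j : ℤ))
          + ((if h ∈ Icc 1 u then (∑ j ∈ Icc v (2*n), (μ j : ℤ)) else 0)
            - (if h+1 ∈ Icc 1 u then (∑ j ∈ Icc v (2*n), (μ j : ℤ)) else 0))
          + ((if 2*n+1-h ∈ Icc 1 u then (∑ j ∈ Icc v (2*n), (μ (2*n+1-j) : ℤ)) else 0)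
            - (if 2*n-h ∈ Icc 1 u then (∑ j ∈ Icc v (2*n), (μ (2*n+1-j) : ℤ)) else 0)) := by
    intro μ
    rw [Finset.sum_congr rfl (fun i _ => inner μ i)]
    simp only [Finset.sum_add_distrib, Finset.sum_sub_distrib, Finset.sum_ite_eq']
  rw [hS ν, hS ν']
  have hTn : (∑ j ∈ Icc v (2*n), ν j) ≤ ∑ j ∈ Icc v (2*n), ν' j := by
    rcases eq_or_lt_of_le hv1 with h1 | h1
    · subst h1; omega
    · have e1 := Tsplit n v ν (by omega) hv2
      have e2 := Tsplit n v ν' (by omega) hv2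
      have e3 := hdom (v-1) (by omega) (by omega)
      omega
  have hRn : (∑ j ∈ Icc v (2*n), ν' (2*n+1-j)) ≤ ∑ j ∈ Icc v (2*n), ν (2*n+1-j) := by
    rw [Rsum n v ν hv1 hv2, Rsum n v ν' hv1 hv2]
    exact hdom (2*n+1-v) (by omega) (by omega)
  have hTz : (∑ j ∈ Icc v (2*n), (ν j : ℤ)) ≤ ∑ j ∈ Icc v (2*n), (ν' j : ℤ) := by
    exact_mod_cast hTn
  have hRz : (∑ j ∈ Icc v (2*n), (ν' (2*n+1-j) : ℤ)) ≤ ∑ j ∈ Icc v (2*n), (ν (2*n+1-j) : ℤ) := by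
    exact_mod_cast hRn
  by_cases c1 : u = h
  · have m1 : h ∈ Icc 1 u := by simp only [mem_Icc]; omega
    have m2 : h+1 ∉ Icc 1 u := by simp only [mem_Icc]; omega
    have m3 : 2*n+1-h ∉ Icc 1 u := by simp only [mem_Icc]; omega
    have m4 : 2*n-h ∉ Icc 1 u := by simp only [mem_Icc]; omega
    simp only [if_pos m1, if_neg m2, if_neg m3, if_neg m4]
    linarith
  · by_cases c2 : u = 2*n-h
    · have m1 : h ∈ Icc 1 u := by simp only [mem_Icc]; omega
      have m2 : h+1 ∈ Icc 1 u := by simp only [mem_Icc]; omega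
      have m3 : 2*n+1-h ∉ Icc 1 u := by simp only [mem_Icc]; omega
      have m4 : 2*n-h ∈ Icc 1 u := by simp only [mem_Icc]; omega
      simp only [if_pos m1, if_pos m2, if_neg m3, if_pos m4]
      linarith
    · have d1 : (h ∈ Icc 1 u) ↔ (h+1 ∈ Icc 1 u) := by simp only [mem_Icc]; omega
      have d2 : (2*n+1-h ∈ Icc 1 u) ↔ (2*n-h ∈ Icc 1 u) := by simp only [mem_Icc]; omega
      simp only [d1, d2, sub_self, add_zero, le_refl]
end

section
/- Let n ≥ 2, h ∈ [1, n−1], m ≥ 1, and A = (a_{i,j}) ∈ Ξ_{2n}. Let ν, ν' ∈ Λ(2n,m) satisfy ν_j ≤ a_{h,j} and ν'_j ≤ a_{h,j} for all j ∈ [1,2n]. If ν ⊴ ν' (dominance order), then A + ∑_{j=1}^{2n} ν_j (E^θ_{h+1,j} − E^θ_{h,j}) ⪯ A + ∑_{j=1}^{2n} ν'_j (E^θ_{h+1,j} − E^θ_{h,j}), and both of these matrices lie in Ξ_{2n}. -/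
open Finset

/-- Entry of the matrix `A + ∑_{j=1}^{2n} ν_j (E^θ_{h+1,j} - E^θ_{h,j})`. -/
def shiftDownMat (n h : ℕ) (A : ℕ → ℕ → ℕ) (ν : ℕ → ℕ) : ℕ → ℕ → ℤ := fun k l =>
  (A k l : ℤ) + ∑ j ∈ Icc 1 (2 * n), (ν j : ℤ) * (EthZ n (h + 1) j k l - EthZ n h j k l)

lemma indSumAux1 (n : ℕ) (ν : ℕ → ℕ) (c k l : ℕ) (hl1 : 1 ≤ l) (hl2 : l ≤ 2 * n) :
    ∑ j ∈ Icc 1 (2 * n), (ν j : ℤ) * (if k = c ∧ l = j then 1 else 0) =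
      if k = c then (ν l : ℤ) else 0 := by
  by_cases hk : k = c
  · simp only [hk, true_and, if_pos, mul_ite, mul_one, mul_zero]
    rw [Finset.sum_ite_eq]
    simp [Finset.mem_Icc, hl1, hl2]
  · simp [hk]

lemma indSumAux2 (n : ℕ) (ν : ℕ → ℕ) (c k l : ℕ) (hl1 : 1 ≤ l) (hl2 : l ≤ 2 * n) :
    ∑ j ∈ Icc 1 (2 * n), (ν j : ℤ) * (if k = c ∧ l = 2 * n + 1 - j then 1 else 0) =
      if k = c then (ν (2 * n + 1 - l) : ℤ) else 0 := by
  by_cases hk : k = c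
  · simp only [hk, true_and, if_pos, mul_ite, mul_one, mul_zero]
    rw [Finset.sum_eq_single (2 * n + 1 - l)]
    · rw [if_pos (by omega)]
    · intro j hj hne
      rw [Finset.mem_Icc] at hj
      rw [if_neg (by omega)]
    · intro hmem
      exact absurd (Finset.mem_Icc.mpr ⟨by omega, by omega⟩) hmem
  · simp [hk]

lemma shiftDownMat_entry (n h : ℕ) (hn : 2 ≤ n) (hh1 : 1 ≤ h) (hh2 : h ≤ n - 1)
    (A : ℕ → ℕ → ℕ) (ν : ℕ → ℕ) (k l : ℕ) (hl1 : 1 ≤ l) (hl2 : l ≤ 2 * n) :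
    shiftDownMat n h A ν k l =
      if k = h then (A k l : ℤ) - ν l
      else if k = h + 1 then (A k l : ℤ) + ν l
      else if k = 2 * n - h then (A k l : ℤ) + ν (2 * n + 1 - l)
      else if k = 2 * n + 1 - h then (A k l : ℤ) - ν (2 * n + 1 - l)
      else (A k l : ℤ) := by
  have e1 : 2 * n + 1 - (h + 1) = 2 * n - h := by omega
  simp only [shiftDownMat, EthZ, e1]
  have hb : ∀ j, (ν j : ℤ) *
      (((if k = h + 1 ∧ l = j then (1:ℤ) else 0) + (if k = 2 * n - h ∧ l = 2 * n + 1 - j then 1 else 0))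
        - ((if k = h ∧ l = j then 1 else 0) + (if k = 2 * n + 1 - h ∧ l = 2 * n + 1 - j then 1 else 0))) =
      (ν j : ℤ) * (if k = h + 1 ∧ l = j then 1 else 0)
      + (ν j : ℤ) * (if k = 2 * n - h ∧ l = 2 * n + 1 - j then 1 else 0)
      - (ν j : ℤ) * (if k = h ∧ l = j then 1 else 0)
      - (ν j : ℤ) * (if k = 2 * n + 1 - h ∧ l = 2 * n + 1 - j then 1 else 0) := fun j => by ring
  rw [Finset.sum_congr rfl fun j _ => hb j]
  rw [Finset.sum_sub_distrib, Finset.sum_sub_distrib, Finset.sum_add_distrib,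
    indSumAux1 n ν (h+1) k l hl1 hl2, indSumAux2 n ν (2*n-h) k l hl1 hl2,
    indSumAux1 n ν h k l hl1 hl2, indSumAux2 n ν (2*n+1-h) k l hl1 hl2]
  split_ifs <;> first | ring1 | (exfalso; omega)

lemma sumSplitAux (f : ℕ → ℕ) (n v : ℕ) (hv1 : 1 ≤ v) (hv2 : v ≤ 2 * n) :
    ∑ j ∈ Icc 1 (v - 1), f j + ∑ j ∈ Icc v (2 * n), f j = ∑ j ∈ Icc 1 (2 * n), f j := by
  have h1 : Icc 1 (v - 1) = Ioc 0 (v - 1) := by rw [← Finset.Icc_add_one_left_eq_Ioc]; rfl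
  have h2 : Icc v (2 * n) = Ioc (v - 1) (2 * n) := by
    rw [← Finset.Icc_add_one_left_eq_Ioc]; congr 1; omega
  have h3 : Icc 1 (2 * n) = Ioc 0 (2 * n) := by rw [← Finset.Icc_add_one_left_eq_Ioc]; rfl
  rw [h1, h2, h3]
  exact Finset.sum_Ioc_consecutive f (by omega) (by omega)

lemma sumReflectAux (f : ℕ → ℕ) (n v : ℕ) (hv1 : 1 ≤ v) (hv2 : v ≤ 2 * n) :
    ∑ j ∈ Icc v (2 * n), f (2 * n + 1 - j) = ∑ j ∈ Icc 1 (2 * n + 1 - v), f j := by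
  apply Finset.sum_nbij' (fun j => 2 * n + 1 - j) (fun j => 2 * n + 1 - j)
  · intro a ha; rw [Finset.mem_Icc] at *; omega
  · intro a ha; rw [Finset.mem_Icc] at *; omega
  · intro a ha; rw [Finset.mem_Icc] at ha; omega
  · intro a ha; rw [Finset.mem_Icc] at ha; omega
  · intro a ha; rfl

lemma innerSumAux (n h : ℕ) (hn : 2 ≤ n) (hh1 : 1 ≤ h) (hh2 : h ≤ n - 1)
    (A : ℕ → ℕ → ℕ) (ν : ℕ → ℕ) (v : ℕ) (hv1 : 1 ≤ v) (hv2 : v ≤ 2 * n) (i : ℕ) :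
    ∑ j ∈ Icc v (2 * n), shiftDownMat n h A ν i j =
      (∑ j ∈ Icc v (2 * n), (A i j : ℤ)) +
      (if i = h then -((∑ j ∈ Icc v (2 * n), ν j : ℕ) : ℤ)
       else if i = h + 1 then ((∑ j ∈ Icc v (2 * n), ν j : ℕ) : ℤ)
       else if i = 2 * n - h then ((∑ j ∈ Icc 1 (2 * n + 1 - v), ν j : ℕ) : ℤ)
       else if i = 2 * n + 1 - h then -((∑ j ∈ Icc 1 (2 * n + 1 - v), ν j : ℕ) : ℤ)
       else 0) := by
  have step : ∀ j ∈ Icc v (2 * n), shiftDownMat n h A ν i j =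
      (A i j : ℤ) + (if i = h then -((ν j : ℕ) : ℤ)
       else if i = h + 1 then ((ν j : ℕ) : ℤ)
       else if i = 2 * n - h then ((ν (2 * n + 1 - j) : ℕ) : ℤ)
       else if i = 2 * n + 1 - h then -((ν (2 * n + 1 - j) : ℕ) : ℤ)
       else 0) := by
    intro j hj
    rw [Finset.mem_Icc] at hj
    rw [shiftDownMat_entry n h hn hh1 hh2 A ν i j (by omega) (by omega)]
    split_ifs <;> ring1
  rw [Finset.sum_congr rfl step, Finset.sum_add_distrib]
  congr 1
  rw [← sumReflectAux ν n v hv1 hv2]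
  split_ifs <;> push_cast <;> simp [Finset.sum_neg_distrib]

lemma outerSumAux (n h : ℕ) (hn : 2 ≤ n) (hh1 : 1 ≤ h) (hh2 : h ≤ n - 1)
    (A : ℕ → ℕ → ℕ) (ν : ℕ → ℕ) (u v : ℕ) (hv1 : 1 ≤ v) (hv2 : v ≤ 2 * n) :
    ∑ i ∈ Icc 1 u, ∑ j ∈ Icc v (2 * n), shiftDownMat n h A ν i j =
      (∑ i ∈ Icc 1 u, ∑ j ∈ Icc v (2 * n), (A i j : ℤ))
      + (if h ∈ Icc 1 u then -((∑ j ∈ Icc v (2 * n), ν j : ℕ) : ℤ) else 0)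
      + (if h + 1 ∈ Icc 1 u then ((∑ j ∈ Icc v (2 * n), ν j : ℕ) : ℤ) else 0)
      + (if 2 * n - h ∈ Icc 1 u then ((∑ j ∈ Icc 1 (2 * n + 1 - v), ν j : ℕ) : ℤ) else 0)
      + (if 2 * n + 1 - h ∈ Icc 1 u then -((∑ j ∈ Icc 1 (2 * n + 1 - v), ν j : ℕ) : ℤ) else 0) := by
  set S : ℤ := ((∑ j ∈ Icc v (2 * n), ν j : ℕ) : ℤ) with hS
  set T : ℤ := ((∑ j ∈ Icc 1 (2 * n + 1 - v), ν j : ℕ) : ℤ) with hT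
  have step : ∀ i ∈ Icc 1 u, ∑ j ∈ Icc v (2 * n), shiftDownMat n h A ν i j =
      (∑ j ∈ Icc v (2 * n), (A i j : ℤ)) +
      ((if i = h then -S else 0) + (if i = h + 1 then S else 0)
        + (if i = 2 * n - h then T else 0) + (if i = 2 * n + 1 - h then -T else 0)) := by
    intro i _
    rw [innerSumAux n h hn hh1 hh2 A ν v hv1 hv2 i]
    congr 1
    split_ifs <;> first | ring1 | (exfalso; omega)
  rw [Finset.sum_congr rfl step, Finset.sum_add_distrib, Finset.sum_add_distrib,
    Finset.sum_add_distrib, Finset.sum_add_distrib,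
    Finset.sum_ite_eq' (Icc 1 u) h (fun _ => -S),
    Finset.sum_ite_eq' (Icc 1 u) (h + 1) (fun _ => S),
    Finset.sum_ite_eq' (Icc 1 u) (2 * n - h) (fun _ => T),
    Finset.sum_ite_eq' (Icc 1 u) (2 * n + 1 - h) (fun _ => -T)]
  ring1

lemma xiAux (n : ℕ) (hn : 2 ≤ n) (h : ℕ) (hh1 : 1 ≤ h) (hh2 : h ≤ n - 1)
    (A : ℕ → ℕ → ℕ)
    (hA : ∀ i j, 1 ≤ i → i ≤ 2 * n → 1 ≤ j → j ≤ 2 * n →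
      A i j = A (2 * n + 1 - i) (2 * n + 1 - j))
    (ν : ℕ → ℕ) (hνle : ∀ j, 1 ≤ j → j ≤ 2 * n → ν j ≤ A h j) :
    ∀ k l, 1 ≤ k → k ≤ 2 * n → 1 ≤ l → l ≤ 2 * n →
      0 ≤ shiftDownMat n h A ν k l ∧
      shiftDownMat n h A ν k l = shiftDownMat n h A ν (2 * n + 1 - k) (2 * n + 1 - l) := by
  intro k l hk1 hk2 hl1 hl2
  have e1 := hνle l hl1 hl2
  have e2 : ν (2 * n + 1 - l) ≤ A (2 * n + 1 - h) l := by
    have h5 := hνle (2 * n + 1 - l) (by omega) (by omega)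
    have hAA := hA h (2 * n + 1 - l) (by omega) (by omega) (by omega) (by omega)
    rw [show 2 * n + 1 - (2 * n + 1 - l) = l by omega] at hAA
    omega
  constructor
  · rw [shiftDownMat_entry n h hn hh1 hh2 A ν k l hl1 hl2]
    split_ifs with H1 H2 H3 H4
    · subst H1; omega
    · subst H2; omega
    · subst H3; omega
    · subst H4; omega
    · omega
  · rw [shiftDownMat_entry n h hn hh1 hh2 A ν k l hl1 hl2,
      shiftDownMat_entry n h hn hh1 hh2 A ν (2 * n + 1 - k) (2 * n + 1 - l)
        (by omega) (by omega),
      show 2 * n + 1 - (2 * n + 1 - l) = l by omega,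
      hA k l hk1 hk2 hl1 hl2]
    split_ifs <;> first | ring1 | (exfalso; omega)

/-- Let `h ∈ [1, n-1]`, `A ∈ Ξ_{2n}` and `ν, ν' ∈ Λ(2n,m)` with `ν_j, ν'_j ≤ a_{h,j}`.
If `ν ⊴ ν'` then `A + ∑_j ν_j (E^θ_{h+1,j} - E^θ_{h,j}) ⪯ A + ∑_j ν'_j (E^θ_{h+1,j} - E^θ_{h,j})`,
and both matrices lie in `Ξ_{2n}` (nonnegative, point-symmetric entries). -/
theorem shiftDown_prec_of_dominance (n : ℕ) (hn : 2 ≤ n) (h : ℕ) (hh1 : 1 ≤ h)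
    (hh2 : h ≤ n - 1) (m : ℕ) (hm : 1 ≤ m) (A : ℕ → ℕ → ℕ)
    (hA : ∀ i j, 1 ≤ i → i ≤ 2 * n → 1 ≤ j → j ≤ 2 * n →
      A i j = A (2 * n + 1 - i) (2 * n + 1 - j))
    (ν ν' : ℕ → ℕ)
    (hνsum : ∑ j ∈ Icc 1 (2 * n), ν j = m) (hν'sum : ∑ j ∈ Icc 1 (2 * n), ν' j = m)
    (hνle : ∀ j, 1 ≤ j → j ≤ 2 * n → ν j ≤ A h j)
    (hν'le : ∀ j, 1 ≤ j → j ≤ 2 * n → ν' j ≤ A h j)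
    (hdom : ∀ t, 1 ≤ t → t ≤ 2 * n → (∑ j ∈ Icc 1 t, ν j) ≤ ∑ j ∈ Icc 1 t, ν' j) :
    -- the first matrix lies in Ξ_{2n}
    ((∀ k l, 1 ≤ k → k ≤ 2 * n → 1 ≤ l → l ≤ 2 * n →
        0 ≤ shiftDownMat n h A ν k l ∧
        shiftDownMat n h A ν k l = shiftDownMat n h A ν (2 * n + 1 - k) (2 * n + 1 - l))
    -- the second matrix lies in Ξ_{2n}
    ∧ (∀ k l, 1 ≤ k → k ≤ 2 * n → 1 ≤ l → l ≤ 2 * n →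
        0 ≤ shiftDownMat n h A ν' k l ∧
        shiftDownMat n h A ν' k l = shiftDownMat n h A ν' (2 * n + 1 - k) (2 * n + 1 - l))
    -- the preorder relation
    ∧ (∀ u v, 1 ≤ u → u < v → v ≤ 2 * n →
        (∑ i ∈ Icc 1 u, ∑ j ∈ Icc v (2 * n), shiftDownMat n h A ν i j)
          ≤ ∑ i ∈ Icc 1 u, ∑ j ∈ Icc v (2 * n), shiftDownMat n h A ν' i j)) := by
  refine ⟨xiAux n hn h hh1 hh2 A hA ν hνle, xiAux n hn h hh1 hh2 A hA ν' hν'le, ?_⟩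
  intro u v hu huv hv
  have hv1 : 1 ≤ v := by omega
  rw [outerSumAux n h hn hh1 hh2 A ν u v hv1 hv,
    outerSumAux n h hn hh1 hh2 A ν' u v hv1 hv]
  have hS : (∑ j ∈ Icc v (2 * n), ν' j) ≤ ∑ j ∈ Icc v (2 * n), ν j := by
    have h1 := sumSplitAux ν n v hv1 hv
    have h2 := sumSplitAux ν' n v hv1 hv
    have h3 := hdom (v - 1) (by omega) (by omega)
    omega
  have hT : (∑ j ∈ Icc 1 (2 * n + 1 - v), ν j) ≤ ∑ j ∈ Icc 1 (2 * n + 1 - v), ν' j :=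
    hdom (2 * n + 1 - v) (by omega) (by omega)
  simp only [Finset.mem_Icc]
  split_ifs <;> omega
end

section
/- Let N ≥ 1, let a = (a_1,…,a_N) ∈ ℕ^N, and let m ∈ ℕ with m ≤ a_1 + ⋯ + a_N. Consider the set D = {ν ∈ Λ(N,m) : ν_i ≤ a_i for all i}. Define ν^max recursively from the left by ν^max_i = min(a_i, m − (ν^max_1 + ⋯ + ν^max_{i−1})), and ν^min recursively from the right by ν^min_i = min(a_i, m − (ν^min_{i+1} + ⋯ + ν^min_N)). Then ν^max and ν^min belong to D, ν ⊴ ν^max for every ν ∈ D, and ν^min ⊴ ν for every ν ∈ D; i.e., D has a greatest element ν^max and a least element ν^min with respect to the dominance order. -/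
open Finset

/-- Let `a ∈ ℕ^N` (indexed `0`-based by `0, …, N-1`) and `m ≤ a_0 + ⋯ + a_{N-1}`.
Suppose `νmax` satisfies the left-to-right recurrence
`νmax_i = min(a_i, m - (νmax_0 + ⋯ + νmax_{i-1}))` and `νmin` satisfies the
right-to-left recurrence `νmin_i = min(a_i, m - (νmin_{i+1} + ⋯ + νmin_{N-1}))`.
Then `νmax` and `νmin` belong to `D = {ν ∈ Λ(N,m) : ν_i ≤ a_i for all i}`,
`νmax` is the greatest element of `D` and `νmin` is the least element of `D`
with respect to the dominance order. -/
theorem dominance_greatest_and_least (N : ℕ) (hN : 1 ≤ N) (a : ℕ → ℕ) (m : ℕ)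
    (hm : m ≤ ∑ i ∈ range N, a i)
    (vmax vmin : ℕ → ℕ)
    (hmax : ∀ i, i < N → vmax i = min (a i) (m - ∑ k ∈ range i, vmax k))
    (hmin : ∀ i, i < N → vmin i = min (a i) (m - ∑ k ∈ Ico (i + 1) N, vmin k)) :
    -- νmax ∈ D
    (((∑ i ∈ range N, vmax i) = m ∧ ∀ i, i < N → vmax i ≤ a i)
    -- νmin ∈ D
    ∧ ((∑ i ∈ range N, vmin i) = m ∧ ∀ i, i < N → vmin i ≤ a i)
    -- νmax is the greatest element of D in the dominance order
    ∧ (∀ ν : ℕ → ℕ, (∑ i ∈ range N, ν i) = m → (∀ i, i < N → ν i ≤ a i) →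
        ∀ t, t ≤ N → (∑ i ∈ range t, ν i) ≤ ∑ i ∈ range t, vmax i)
    -- νmin is the least element of D in the dominance order
    ∧ (∀ ν : ℕ → ℕ, (∑ i ∈ range N, ν i) = m → (∀ i, i < N → ν i ≤ a i) →
        ∀ t, t ≤ N → (∑ i ∈ range t, vmin i) ≤ ∑ i ∈ range t, ν i)) := by

  have Hmax : ∀ t, t ≤ N → ∑ i ∈ range t, vmax i = min m (∑ i ∈ range t, a i) := by
    intro t
    induction t with
    | zero => simp
    | succ t ih =>
      intro ht
      rw [sum_range_succ, sum_range_succ, ih (by omega), hmax t (by omega),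
        ih (by omega)]
      omega
  have Hmin0 : ∀ d, d ≤ N → ∑ i ∈ Ico (N - d) N, vmin i
      = min m (∑ i ∈ Ico (N - d) N, a i) := by
    intro d
    induction d with
    | zero => simp
    | succ d ih =>
      intro hd
      have ht : N - (d + 1) < N := by omega
      have h1 : N - (d + 1) + 1 = N - d := by omega
      rw [Finset.sum_eq_sum_Ico_succ_bot ht vmin,
        Finset.sum_eq_sum_Ico_succ_bot ht a, hmin _ ht, h1, ih (by omega)]
      omega
  have Hmin : ∀ t, t ≤ N → ∑ i ∈ Ico t N, vmin i = min m (∑ i ∈ Ico t N, a i) := by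
    intro t ht
    have := Hmin0 (N - t) (by omega)
    rwa [Nat.sub_sub_self ht] at this
  have hsplit : ∀ f : ℕ → ℕ, ∀ t, t ≤ N →
      ∑ i ∈ range t, f i + ∑ i ∈ Ico t N, f i = ∑ i ∈ range N, f i := by
    intro f t ht
    rw [range_eq_Ico, range_eq_Ico]
    exact Finset.sum_Ico_consecutive f (Nat.zero_le t) ht
  refine ⟨⟨?_, ?_⟩, ⟨?_, ?_⟩, ?_, ?_⟩
  · rw [Hmax N le_rfl]; omega
  · intro i hi; rw [hmax i hi]; exact min_le_left _ _
  · have := Hmin 0 (by omega)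
    rw [← range_eq_Ico] at this
    rw [this]; omega
  · intro i hi; rw [hmin i hi]; exact min_le_left _ _
  · intro ν hν hνa t ht
    rw [Hmax t ht]
    have h1 : ∑ i ∈ range t, ν i ≤ m := by
      rw [← hν]
      exact Finset.sum_le_sum_of_subset (Finset.range_subset_range.2 ht)
    have h2 : ∑ i ∈ range t, ν i ≤ ∑ i ∈ range t, a i :=
      Finset.sum_le_sum fun i hi => hνa i (by simp at hi; omega)
    omega
  · intro ν hν hνa t ht
    have h1 := hsplit vmin t ht
    have h2 := hsplit ν t ht
    have h3 := hsplit a t ht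
    have h4 : ∑ i ∈ Ico t N, ν i ≤ ∑ i ∈ Ico t N, a i :=
      Finset.sum_le_sum fun i hi => hνa i (by simp [Finset.mem_Ico] at hi; omega)
    have h5 := Hmin t ht
    have h6 := Hmin 0 (by omega)
    rw [← range_eq_Ico] at h6
    omega
end

section
/- Let n ≥ 1, let A = (a_{i,j}) ∈ Ξ_{2n+1}, let k ∈ [1,n], and let c, m be integers with 0 ≤ c < m ≤ a_{n,k}. For E'^θ_{i,j} := E_{i,j} + E_{2n+2−i,2n+2−j} (matrix units of size 2n+1), set B_c = A − c·E'^θ_{n,k} + c·E'^θ_{n+2,k} and B_m = A − m·E'^θ_{n,k} + m·E'^θ_{n+2,k}. Then B_c and B_m lie in Ξ_{2n+1}, B_c ⪯ B_m, and B_m ⪯ B_c fails; that is, B_c ≺ B_m strictly in the preorder. -/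
open Finset

/-- Entry of the matrix `E'^θ_{i,j} = E_{i,j} + E_{2n+2-i,2n+2-j}` (size `2n+1`,
`1`-based indexing), as an integer. -/
def EpZ (n i j : ℕ) : ℕ → ℕ → ℤ := fun x y =>
  (if x = i ∧ y = j then 1 else 0) + (if x = 2 * n + 2 - i ∧ y = 2 * n + 2 - j then 1 else 0)

/-- Entry of the matrix `B_c = A - c·E'^θ_{n,k} + c·E'^θ_{n+2,k}`. -/
def moveMat (n k : ℕ) (A : ℕ → ℕ → ℕ) (c : ℕ) : ℕ → ℕ → ℤ := fun x y =>
  (A x y : ℤ) - (c : ℤ) * EpZ n n k x y + (c : ℤ) * EpZ n (n + 2) k x y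

lemma sum_ind (s t : Finset ℕ) (p q : ℕ) :
    (∑ i ∈ s, ∑ j ∈ t, (if i = p ∧ j = q then (1:ℤ) else 0))
    = if p ∈ s ∧ q ∈ t then 1 else 0 := by
  simp [ite_and, Finset.sum_ite_eq']

lemma sum_moveMat (n k : ℕ) (A : ℕ → ℕ → ℕ) (c u v : ℕ) :
    (∑ i ∈ Icc 1 u, ∑ j ∈ Icc v (2*n+1), moveMat n k A c i j)
    = (∑ i ∈ Icc 1 u, ∑ j ∈ Icc v (2*n+1), (A i j : ℤ))
      + c * ((if (n+2) ∈ Icc 1 u ∧ k ∈ Icc v (2*n+1) then (1:ℤ) else 0)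
           + (if n ∈ Icc 1 u ∧ (2*n+2-k) ∈ Icc v (2*n+1) then 1 else 0)
           - (if n ∈ Icc 1 u ∧ k ∈ Icc v (2*n+1) then 1 else 0)
           - (if (n+2) ∈ Icc 1 u ∧ (2*n+2-k) ∈ Icc v (2*n+1) then 1 else 0)) := by
  simp only [moveMat, EpZ, show 2*n+2-n = n+2 from by omega,
    show 2*n+2-(n+2) = n from by omega, mul_add, sub_add_eq_sub_sub]
  simp only [Finset.sum_add_distrib, Finset.sum_sub_distrib, ← Finset.mul_sum, sum_ind]
  ring

lemma moveMat_mem (n : ℕ) (hn : 1 ≤ n) (A : ℕ → ℕ → ℕ)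
    (hA : ∀ i j, 1 ≤ i → i ≤ 2 * n + 1 → 1 ≤ j → j ≤ 2 * n + 1 →
      A i j = A (2 * n + 2 - i) (2 * n + 2 - j))
    (k : ℕ) (hk1 : 1 ≤ k) (hk2 : k ≤ n) (t : ℕ) (hta : t ≤ A n k) :
    ∀ x y, 1 ≤ x → x ≤ 2 * n + 1 → 1 ≤ y → y ≤ 2 * n + 1 →
        0 ≤ moveMat n k A t x y ∧
        moveMat n k A t x y = moveMat n k A t (2 * n + 2 - x) (2 * n + 2 - y) := by
  have hsym : A n k = A (n+2) (2*n+2-k) := by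
    have := hA n k hn (by omega) hk1 (by omega)
    rwa [show 2*n+2-n = n+2 from by omega] at this
  intro x y hx1 hx2 hy1 hy2
  constructor
  · by_cases h1 : x = n ∧ y = k
    · have hv : A x y = A n k := by rw [h1.1, h1.2]
      simp only [moveMat, EpZ, show 2*n+2-n = n+2 from by omega,
        show 2*n+2-(n+2) = n from by omega]
      split_ifs <;> omega
    · by_cases h2 : x = n+2 ∧ y = 2*n+2-k
      · have hv : A x y = A (n+2) (2*n+2-k) := by rw [h2.1, h2.2]
        simp only [moveMat, EpZ, show 2*n+2-n = n+2 from by omega,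
          show 2*n+2-(n+2) = n from by omega]
        split_ifs <;> omega
      · simp only [moveMat, EpZ, show 2*n+2-n = n+2 from by omega,
          show 2*n+2-(n+2) = n from by omega]
        split_ifs <;> omega
  · have hAxy := hA x y hx1 hx2 hy1 hy2
    simp only [moveMat, EpZ, show 2*n+2-n = n+2 from by omega,
      show 2*n+2-(n+2) = n from by omega, hAxy]
    split_ifs <;> omega

/-- Let `A ∈ Ξ_{2n+1}`, `k ∈ [1,n]` and `0 ≤ c < m ≤ a_{n,k}`.  Then
`B_c = A - c·E'^θ_{n,k} + c·E'^θ_{n+2,k}` and `B_m = A - m·E'^θ_{n,k} + m·E'^θ_{n+2,k}`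
lie in `Ξ_{2n+1}`, `B_c ⪯ B_m`, and `B_m ⪯ B_c` fails; i.e. `B_c ≺ B_m` strictly. -/
theorem moveMat_strict_prec (n : ℕ) (hn : 1 ≤ n) (A : ℕ → ℕ → ℕ)
    (hA : ∀ i j, 1 ≤ i → i ≤ 2 * n + 1 → 1 ≤ j → j ≤ 2 * n + 1 →
      A i j = A (2 * n + 2 - i) (2 * n + 2 - j))
    (k : ℕ) (hk1 : 1 ≤ k) (hk2 : k ≤ n)
    (c m : ℕ) (hcm : c < m) (hma : m ≤ A n k) :
    -- B_c lies in Ξ_{2n+1}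
    ((∀ x y, 1 ≤ x → x ≤ 2 * n + 1 → 1 ≤ y → y ≤ 2 * n + 1 →
        0 ≤ moveMat n k A c x y ∧
        moveMat n k A c x y = moveMat n k A c (2 * n + 2 - x) (2 * n + 2 - y))
    -- B_m lies in Ξ_{2n+1}
    ∧ (∀ x y, 1 ≤ x → x ≤ 2 * n + 1 → 1 ≤ y → y ≤ 2 * n + 1 →
        0 ≤ moveMat n k A m x y ∧
        moveMat n k A m x y = moveMat n k A m (2 * n + 2 - x) (2 * n + 2 - y))
    -- B_c ⪯ B_m
    ∧ (∀ u v, 1 ≤ u → u < v → v ≤ 2 * n + 1 →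
        (∑ i ∈ Icc 1 u, ∑ j ∈ Icc v (2 * n + 1), moveMat n k A c i j)
          ≤ ∑ i ∈ Icc 1 u, ∑ j ∈ Icc v (2 * n + 1), moveMat n k A m i j)
    -- but not B_m ⪯ B_c
    ∧ ¬ (∀ u v, 1 ≤ u → u < v → v ≤ 2 * n + 1 →
        (∑ i ∈ Icc 1 u, ∑ j ∈ Icc v (2 * n + 1), moveMat n k A m i j)
          ≤ ∑ i ∈ Icc 1 u, ∑ j ∈ Icc v (2 * n + 1), moveMat n k A c i j)) := by
  refine ⟨moveMat_mem n hn A hA k hk1 hk2 c (by omega),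
    moveMat_mem n hn A hA k hk1 hk2 m hma, ?_, ?_⟩
  · intro u v hu huv hv
    rw [sum_moveMat, sum_moveMat]
    have hX : (0:ℤ) ≤ ((if (n+2) ∈ Icc 1 u ∧ k ∈ Icc v (2*n+1) then (1:ℤ) else 0)
           + (if n ∈ Icc 1 u ∧ (2*n+2-k) ∈ Icc v (2*n+1) then 1 else 0)
           - (if n ∈ Icc 1 u ∧ k ∈ Icc v (2*n+1) then 1 else 0)
           - (if (n+2) ∈ Icc 1 u ∧ (2*n+2-k) ∈ Icc v (2*n+1) then 1 else 0)) := by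
      simp only [Finset.mem_Icc]
      split_ifs <;> omega
    have hcm' : (c:ℤ) ≤ (m:ℤ) := by exact_mod_cast hcm.le
    exact add_le_add_right (mul_le_mul_of_nonneg_right hcm' hX) _
  · intro h
    have := h n (n+1) hn (by omega) (by omega)
    rw [sum_moveMat, sum_moveMat] at this
    simp only [Finset.mem_Icc] at this
    split_ifs at this <;> omega
end
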